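/- arXiv:1412.4115 — 6 statements merged into one kernel-verified Lean document; each statement's English description precedes it below -/
import Mathlib

section
/- For 0 < |t| < 1 and 0 < |q| < 1 with t, q real, the q-exponential series ∑_{k=0}^∞ t^k / ∏_{n=1}^k (1 - q^n) equals the infinite product ∏_{k=0}^∞ 1/(1 - q^k t). -/
open Finset

/-- q-Pochhammer symbol `(a)_n = ∏_{j=0}^{n-1} (1 - a q^j)`. -/
noncomputable def qPoch (q a : ℝ) (n : ℕ) : ℝ := ∏ j ∈ Finset.range n, (1 - a * q ^ j)

/-- q-exponential `E_q(t) = ∏_{k=0}^∞ (1 - q^k t)⁻¹`. -/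
noncomputable def qExp (q t : ℝ) : ℝ := ∏' k : ℕ, (1 - q ^ k * t)⁻¹

/-- q-binomial coefficient. -/
noncomputable def qBinom (q : ℝ) (n k : ℕ) : ℝ :=
  qPoch q q n / (qPoch q q k * qPoch q q (n - k))

/-- Padé numerator polynomial `A_n(t)`. -/
noncomputable def padeA (q : ℝ) (n : ℕ) (t : ℝ) : ℝ :=
  ∑ k ∈ Finset.range (n + 1),
    qBinom q n k * q ^ (k * n) * qPoch q (q ^ (n + 1)) (n - k) * t ^ k

/-- Padé denominator polynomial `B_n(t)`. -/
noncomputable def padeB (q : ℝ) (n : ℕ) (t : ℝ) : ℝ :=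
  ∑ k ∈ Finset.range (n + 1),
    qBinom q n k * q ^ (k * (k - 1) / 2) * qPoch q (q ^ (n + 1)) (n - k) * (-t) ^ k

/-- Padé remainder `S_n(t)`. -/
noncomputable def padeS (q : ℝ) (n : ℕ) (t : ℝ) : ℝ :=
  (-1) ^ n * t ^ (2 * n + 1) * q ^ ((3 * n ^ 2 + n) / 2) *
    (qPoch q q n / qPoch q q (2 * n + 1)) *
    ∑' k : ℕ, qPoch q (q ^ (n + 1)) k * t ^ k / (qPoch q q k * qPoch q (q ^ (2 * n + 2)) k)

open Filter Real

lemma qPoch_zero' (q a : ℝ) : qPoch q a 0 = 1 := by simp [qPoch]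

lemma qPoch_succ' (q a : ℝ) (n : ℕ) : qPoch q a (n + 1) = qPoch q a n * (1 - a * q ^ n) := by
  simp [qPoch, Finset.prod_range_succ]

lemma abs_qpow_mul_lt_one {q s : ℝ} (hq1 : |q| < 1) (hs : |s| < 1) (k : ℕ) :
    |q ^ k * s| < 1 := by
  rw [abs_mul, abs_pow]
  calc |q| ^ k * |s| ≤ 1 * |s| := by
        have := pow_le_one₀ (abs_nonneg q) hq1.le (n := k)
        nlinarith [abs_nonneg s]
    _ < 1 := by simpa using hs

lemma qPoch_pos' {q : ℝ} (hq1 : |q| < 1) (n : ℕ) : 0 < qPoch q q n := by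
  refine Finset.prod_pos fun j _ => ?_
  have h : |q * q ^ j| < 1 := by
    rw [mul_comm]
    exact abs_qpow_mul_lt_one hq1 hq1 j
  linarith [(abs_lt.1 h).2]

lemma summable_qexp {q : ℝ} (hq1 : |q| < 1) {s : ℝ} (hs : |s| < 1) :
    Summable (fun k : ℕ => s ^ k / qPoch q q k) := by
  set r : ℝ := (1 + |s|) / 2 with hr
  have hr1 : r < 1 := by simp only [hr]; linarith
  have hrpos : 0 < r := by positivity
  apply summable_of_ratio_norm_eventually_le hr1
  have htend : Tendsto (fun k : ℕ => 1 - q * q ^ k) atTop (nhds 1) := by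
    have h0 : Tendsto (fun k : ℕ => q ^ k) atTop (nhds 0) :=
      tendsto_pow_atTop_nhds_zero_of_abs_lt_one hq1
    have := (h0.const_mul q).const_sub 1
    simpa using this
  have hlt : |s| / r < 1 := by
    rw [div_lt_one hrpos]; simp only [hr]; linarith
  filter_upwards [htend.eventually (eventually_gt_nhds hlt)] with k hk
  have hpk := qPoch_pos' hq1 k
  have hpk1 := qPoch_pos' hq1 (k + 1)
  have hfac : 0 < 1 - q * q ^ k := by
    have h := abs_qpow_mul_lt_one hq1 hq1 k
    rw [mul_comm] at h
    linarith [(abs_lt.1 h).2]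
  rw [norm_div, norm_div, norm_pow, norm_pow]
  rw [Real.norm_eq_abs s, Real.norm_eq_abs (qPoch q q (k+1)), Real.norm_eq_abs (qPoch q q k),
    abs_of_pos hpk1, abs_of_pos hpk, qPoch_succ']
  rw [mul_div_assoc', div_le_div_iff₀ (by positivity) hpk]
  have hsk : (0:ℝ) ≤ |s| ^ k := by positivity
  have hkey : |s| ≤ r * (1 - q * q ^ k) := by
    have : |s| / r < 1 - q * q ^ k := hk
    calc |s| = r * (|s| / r) := by field_simp
      _ ≤ r * (1 - q * q ^ k) := by nlinarith
  calc |s| ^ (k + 1) * qPoch q q k = (|s| ^ k * qPoch q q k) * |s| := by ring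
    _ ≤ (|s| ^ k * qPoch q q k) * (r * (1 - q * q ^ k)) := by nlinarith [mul_nonneg hsk hpk.le]
    _ = r * |s| ^ k * (qPoch q q k * (1 - q * q ^ k)) := by ring

lemma qexp_feq {q : ℝ} (hq1 : |q| < 1) {s : ℝ} (hs : |s| < 1) :
    (∑' k : ℕ, (q * s) ^ k / qPoch q q k)
      = (1 - s) * ∑' k : ℕ, s ^ k / qPoch q q k := by
  have hqs : |q * s| < 1 := by
    rw [abs_mul]
    exact mul_lt_one_of_nonneg_of_lt_one_left (abs_nonneg q) hq1 hs.le |>.trans_le le_rfl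
  have h1 : Summable (fun k : ℕ => s ^ k / qPoch q q k) := summable_qexp hq1 hs
  have h2 : Summable (fun k : ℕ => (q * s) ^ k / qPoch q q k) := summable_qexp hq1 hqs
  have hD : ∀ k : ℕ, s ^ k / qPoch q q k - (q * s) ^ k / qPoch q q k
      = s ^ k * (1 - q ^ k) / qPoch q q k := by
    intro k; rw [mul_pow]; ring
  have hsubsum : Summable (fun k : ℕ => s ^ k * (1 - q ^ k) / qPoch q q k) := by
    have := h1.sub h2
    simpa only [hD] using this
  have key : (∑' k : ℕ, s ^ k / qPoch q q k) - (∑' k : ℕ, (q * s) ^ k / qPoch q q k)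
      = ∑' k : ℕ, s ^ k * (1 - q ^ k) / qPoch q q k := by
    rw [← Summable.tsum_sub h1 h2]
    exact tsum_congr hD
  have hshift : ∀ k : ℕ, s ^ (k + 1) * (1 - q ^ (k + 1)) / qPoch q q (k + 1)
      = s * (s ^ k / qPoch q q k) := by
    intro k
    have hfac : (1 : ℝ) - q ^ (k + 1) ≠ 0 := by
      have h := abs_qpow_mul_lt_one hq1 hq1 k
      have : |q ^ (k + 1)| < 1 := by
        rw [pow_succ]
        simpa [mul_comm] using h
      linarith [(abs_lt.1 this).2]
    have hp : qPoch q q k ≠ 0 := (qPoch_pos' hq1 k).ne'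
    have e : (1 : ℝ) - q ^ (k + 1) = 1 - q * q ^ k := by rw [pow_succ]; ring
    rw [e] at hfac
    rw [qPoch_succ', pow_succ, e]
    field_simp
  have key2 : (∑' k : ℕ, s ^ k * (1 - q ^ k) / qPoch q q k)
      = s * ∑' k : ℕ, s ^ k / qPoch q q k := by
    rw [Summable.tsum_eq_zero_add hsubsum]
    simp only [hshift]
    rw [tsum_mul_left]
    simp [qPoch_zero']
  rw [key2] at key
  linarith [key]

lemma qexp_iter {q t : ℝ} (hq1 : |q| < 1) (ht1 : |t| < 1) (n : ℕ) :
    (∑' k : ℕ, (q ^ n * t) ^ k / qPoch q q k)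
      = (∏ j ∈ Finset.range n, (1 - q ^ j * t)) * ∑' k : ℕ, t ^ k / qPoch q q k := by
  induction n with
  | zero => simp
  | succ n ih =>
    have habs : |q ^ n * t| < 1 := abs_qpow_mul_lt_one hq1 ht1 n
    have hfe := qexp_feq hq1 habs
    have harg : q * (q ^ n * t) = q ^ (n + 1) * t := by rw [pow_succ]; ring
    rw [harg] at hfe
    rw [hfe, ih, Finset.prod_range_succ]
    ring

lemma summable_shift {q t : ℝ} (hq1 : |q| < 1) (ht1 : |t| < 1) :
    Summable (fun k : ℕ => |t| ^ k / qPoch q q (k + 1)) := by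
  have habs : |(|t|)| < 1 := by rwa [abs_abs]
  have h0 : Summable (fun k : ℕ => (1 - |q|)⁻¹ * (|t| ^ k / qPoch q q k)) :=
    (summable_qexp hq1 habs).mul_left _
  apply Summable.of_nonneg_of_le
    (fun k => div_nonneg (by positivity) (qPoch_pos' hq1 (k+1)).le) _ h0
  intro k
  have hpk := qPoch_pos' hq1 k
  have hpk1 := qPoch_pos' hq1 (k + 1)
  have hq0 : (0:ℝ) < 1 - |q| := by linarith
  have hbound : (1 - |q|) * qPoch q q k ≤ qPoch q q (k + 1) := by
    rw [qPoch_succ']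
    have h1 : |q * q ^ k| ≤ |q| := by
      rw [abs_mul, abs_pow]
      calc |q| * |q| ^ k ≤ |q| * 1 := by
            nlinarith [pow_le_one₀ (abs_nonneg q) hq1.le (n := k), abs_nonneg q]
        _ = |q| := by ring
    have h2 : 1 - |q| ≤ 1 - q * q ^ k := by linarith [(abs_le.1 h1).2]
    nlinarith
  have htk : (0:ℝ) ≤ |t| ^ k := by positivity
  rw [div_le_iff₀ hpk1, mul_comm ((1 - |q|)⁻¹) _, mul_assoc, div_mul_eq_mul_div,
    le_div_iff₀ hpk]
  calc |t| ^ k * qPoch q q k = |t| ^ k * qPoch q q k := rfl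
    _ ≤ |t| ^ k * ((1 - |q|)⁻¹ * qPoch q q (k + 1)) := by
        have : qPoch q q k ≤ (1 - |q|)⁻¹ * qPoch q q (k + 1) := by
          rw [le_inv_mul_iff₀ hq0]
          linarith [hbound]
        nlinarith
    _ = |t| ^ k * ((1 - |q|)⁻¹ * qPoch q q (k + 1)) := rfl

set_option maxHeartbeats 1000000 in
lemma qexp_near_one {q t : ℝ} (hq1 : |q| < 1) (ht1 : |t| < 1) {s : ℝ} (hst : |s| ≤ |t|) :
    |(∑' k : ℕ, s ^ k / qPoch q q k) - 1|
      ≤ |s| * ∑' k : ℕ, |t| ^ k / qPoch q q (k + 1) := by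
  have hs1 : |s| < 1 := lt_of_le_of_lt hst ht1
  have h1 : Summable (fun k : ℕ => s ^ k / qPoch q q k) := summable_qexp hq1 hs1
  have h1' : Summable (fun k : ℕ => s ^ (k + 1) / qPoch q q (k + 1)) :=
    (summable_nat_add_iff 1).2 h1
  have heq : (∑' k : ℕ, s ^ k / qPoch q q k) - 1
      = ∑' k : ℕ, s ^ (k + 1) / qPoch q q (k + 1) := by
    rw [Summable.tsum_eq_zero_add h1]
    simp [qPoch_zero']
  rw [heq]
  have hC := summable_shift hq1 ht1
  calc |∑' k : ℕ, s ^ (k + 1) / qPoch q q (k + 1)|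
      ≤ ∑' k : ℕ, |s ^ (k + 1) / qPoch q q (k + 1)| := by
        simpa [abs_div] using norm_tsum_le_tsum_norm h1'.norm
    _ ≤ ∑' k : ℕ, |s| * (|t| ^ k / qPoch q q (k + 1)) := by
        apply Summable.tsum_le_tsum _ h1'.abs (hC.mul_left _)
        intro k
        have hpk1 := qPoch_pos' hq1 (k + 1)
        rw [abs_div, abs_of_pos hpk1, abs_pow, pow_succ, mul_comm (|s| ^ k) (|s|),
          mul_div_assoc]
        have hle : |s| ^ k ≤ |t| ^ k := pow_le_pow_left₀ (abs_nonneg s) hst k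
        gcongr
    _ = |s| * ∑' k : ℕ, |t| ^ k / qPoch q q (k + 1) := tsum_mul_left

lemma qexp_tendsto_one {q t : ℝ} (hq1 : |q| < 1) (ht1 : |t| < 1) :
    Tendsto (fun n : ℕ => ∑' k : ℕ, (q ^ n * t) ^ k / qPoch q q k) atTop (nhds 1) := by
  set C : ℝ := ∑' k : ℕ, |t| ^ k / qPoch q q (k + 1) with hC
  have habs : ∀ n : ℕ, |(fun n : ℕ => ∑' k : ℕ, (q ^ n * t) ^ k / qPoch q q k) n - 1|
      ≤ (|t| * C) * |q| ^ n := by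
    intro n
    have hst : |q ^ n * t| ≤ |t| := by
      rw [abs_mul, abs_pow]
      nlinarith [pow_le_one₀ (abs_nonneg q) hq1.le (n := n), abs_nonneg t,
        pow_nonneg (abs_nonneg q) n]
    have h := qexp_near_one hq1 ht1 hst
    have : |q ^ n * t| * C ≤ (|t| * C) * |q| ^ n := by
      rw [abs_mul, abs_pow]
      have hC0 : 0 ≤ C := by
        rw [hC]
        apply tsum_nonneg
        intro k
        exact div_nonneg (by positivity) (qPoch_pos' hq1 (k+1)).le
      nlinarith [pow_nonneg (abs_nonneg q) n]
    linarith
  have hgeo : Tendsto (fun n : ℕ => (|t| * C) * |q| ^ n) atTop (nhds 0) := by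
    have := tendsto_pow_atTop_nhds_zero_of_lt_one (abs_nonneg q) hq1
    simpa using this.const_mul (|t| * C)
  have habs' : Tendsto (fun n : ℕ =>
      |(fun n : ℕ => ∑' k : ℕ, (q ^ n * t) ^ k / qPoch q q k) n - 1|) atTop (nhds 0) :=
    squeeze_zero (fun n => abs_nonneg _) habs hgeo
  have hsub : Tendsto (fun n : ℕ =>
      (∑' k : ℕ, (q ^ n * t) ^ k / qPoch q q k) - 1) atTop (nhds 0) :=
    (tendsto_zero_iff_abs_tendsto_zero _).2 habs'
  have := hsub.add (tendsto_const_nhds (x := (1:ℝ)))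
  simpa using this

lemma summable_log_fac {q t : ℝ} (hq1 : |q| < 1) (ht1 : |t| < 1) :
    Summable (fun k : ℕ => Real.log (1 - q ^ k * t)) := by
  apply Summable.of_norm
  have hbound : ∀ k : ℕ, ‖Real.log (1 - q ^ k * t)‖ ≤ (|t| / (1 - |t|)) * |q| ^ k := by
    intro k
    have hx : |q ^ k * t| < 1 := abs_qpow_mul_lt_one hq1 ht1 k
    have h := Real.abs_log_sub_add_sum_range_le hx 0
    simp only [Finset.range_zero, Finset.sum_empty, zero_add, pow_one] at h
    have hxt : |q ^ k * t| ≤ |t| := by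
      rw [abs_mul, abs_pow]
      nlinarith [pow_le_one₀ (abs_nonneg q) hq1.le (n := k), abs_nonneg t,
        pow_nonneg (abs_nonneg q) k]
    have h1t : (0:ℝ) < 1 - |t| := by linarith
    have h1x : (0:ℝ) < 1 - |q ^ k * t| := by linarith
    calc ‖Real.log (1 - q ^ k * t)‖ = |Real.log (1 - q ^ k * t)| := rfl
      _ ≤ |q ^ k * t| / (1 - |q ^ k * t|) := h
      _ ≤ |q ^ k * t| / (1 - |t|) := by
          apply div_le_div_of_nonneg_left (abs_nonneg _) h1t
          linarith
      _ = (|q| ^ k * |t|) / (1 - |t|) := by rw [abs_mul, abs_pow]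
      _ = (|t| / (1 - |t|)) * |q| ^ k := by ring
  apply Summable.of_nonneg_of_le (fun k => norm_nonneg _) hbound
  exact (summable_geometric_of_lt_one (abs_nonneg q) hq1).mul_left _

lemma one_sub_qpow_mul_pos {q t : ℝ} (hq1 : |q| < 1) (ht1 : |t| < 1) (k : ℕ) :
    0 < 1 - q ^ k * t := by
  have h := abs_qpow_mul_lt_one hq1 ht1 k
  linarith [(abs_lt.1 h).2]

lemma multipliable_fac {q t : ℝ} (hq1 : |q| < 1) (ht1 : |t| < 1) :
    Multipliable (fun k : ℕ => 1 - q ^ k * t) := by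
  exact Real.multipliable_of_summable_log
    (fun k => one_sub_qpow_mul_pos hq1 ht1 k)
    (summable_log_fac hq1 ht1)

lemma multipliable_inv_fac {q t : ℝ} (hq1 : |q| < 1) (ht1 : |t| < 1) :
    Multipliable (fun k : ℕ => (1 - q ^ k * t)⁻¹) := by
  apply Real.multipliable_of_summable_log
    (fun k => inv_pos.2 (one_sub_qpow_mul_pos hq1 ht1 k))
  simp only [Real.log_inv]
  exact (summable_log_fac hq1 ht1).neg

theorem qExp_series_eq_tprod' (q t : ℝ) (hq1 : |q| < 1) (ht1 : |t| < 1) :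
    ∑' k : ℕ, t ^ k / qPoch q q k = ∏' k : ℕ, (1 - q ^ k * t)⁻¹ := by
  set g : ℝ := ∑' k : ℕ, t ^ k / qPoch q q k with hg
  set P : ℝ := ∏' k : ℕ, (1 - q ^ k * t) with hP
  set F : ℝ := ∏' k : ℕ, (1 - q ^ k * t)⁻¹ with hF
  have M1 := multipliable_fac hq1 ht1
  have M2 := multipliable_inv_fac hq1 ht1
  have hPF : P * F = 1 := by
    rw [hP, hF, ← Multipliable.tprod_mul M1 M2]
    have : ∀ k : ℕ, (1 - q ^ k * t) * (1 - q ^ k * t)⁻¹ = 1 := fun k =>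
      mul_inv_cancel₀ (one_sub_qpow_mul_pos hq1 ht1 k).ne'
    simp only [this]
    exact tprod_one
  have hgP : g * P = 1 := by
    have h1 : Tendsto (fun n : ℕ => (∏ j ∈ Finset.range n, (1 - q ^ j * t)) * g)
        atTop (nhds (P * g)) := (M1.hasProd.tendsto_prod_nat).mul_const g
    have h2 : (fun n : ℕ => (∏ j ∈ Finset.range n, (1 - q ^ j * t)) * g)
        = fun n : ℕ => ∑' k : ℕ, (q ^ n * t) ^ k / qPoch q q k :=
      funext fun n => (qexp_iter hq1 ht1 n).symm
    rw [h2] at h1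
    have := tendsto_nhds_unique h1 (qexp_tendsto_one hq1 ht1)
    rw [mul_comm] at this
    exact this
  have hPne : P ≠ 0 := fun h => by simp [h] at hPF
  have : g = g * (P * F) := by rw [hPF, mul_one]
  rw [this, ← mul_assoc, hgP, one_mul]

/-- Euler's identity: the q-exponential series equals the infinite product. -/
theorem qExp_series_eq_tprod (q t : ℝ) (hq0 : 0 < |q|) (hq1 : |q| < 1)
    (ht0 : 0 < |t|) (ht1 : |t| < 1) :
    ∑' k : ℕ, t ^ k / qPoch q q k = ∏' k : ℕ, (1 - q ^ k * t)⁻¹ :=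
  qExp_series_eq_tprod' q t hq1 ht1
end

section
/- Denominator bound (case a): let q = 1/d with |d| ≥ 2 an integer, t = u/v with gcd(u,v) = 1, v ≥ 1, 0 < |t| < 1, and M, N ∈ ℤ. Then v^{n+K} |d|^{δ_{n,K}} · (N A_n(q^K t) − M (t)_K B_n(q^K t)) ∈ ℤ, where δ_{n,K} = (K^2−K)/2 + (3n^2+n)/2 if 0 ≤ K ≤ n and δ_{n,K} = (K^2−K)/2 + (n^2−n)/2 + nK if K > n. -/
open Finset

/-- Exponent `δ_{n,K}` in case (a). -/
def deltaA (n K : ℕ) : ℕ :=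
  if K ≤ n then (K ^ 2 - K) / 2 + (3 * n ^ 2 + n) / 2
  else (K ^ 2 - K) / 2 + (n ^ 2 - n) / 2 + n * K

namespace DenAux

/-- `x * d^e * v^f` is an integer. -/
def Den (d : ℤ) (v : ℕ) (x : ℝ) (e f : ℕ) : Prop :=
  ∃ z : ℤ, (z : ℝ) = x * (d : ℝ) ^ e * (v : ℝ) ^ f

variable {d : ℤ} {v : ℕ}

lemma den_int (z : ℤ) : Den d v (z : ℝ) 0 0 := ⟨z, by simp⟩

lemma den_one : Den d v 1 0 0 := ⟨1, by simp⟩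

lemma den_mul {x y : ℝ} {e f e' f' : ℕ} (hx : Den d v x e f) (hy : Den d v y e' f') :
    Den d v (x * y) (e + e') (f + f') := by
  obtain ⟨a, ha⟩ := hx; obtain ⟨b, hb⟩ := hy
  exact ⟨a * b, by push_cast; rw [ha, hb, pow_add, pow_add]; ring⟩

lemma den_add {x y : ℝ} {e f : ℕ} (hx : Den d v x e f) (hy : Den d v y e f) :
    Den d v (x + y) e f := by
  obtain ⟨a, ha⟩ := hx; obtain ⟨b, hb⟩ := hy
  exact ⟨a + b, by push_cast; rw [ha, hb]; ring⟩

lemma den_neg {x : ℝ} {e f : ℕ} (hx : Den d v x e f) : Den d v (-x) e f := by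
  obtain ⟨a, ha⟩ := hx
  exact ⟨-a, by push_cast; rw [ha]; ring⟩

lemma den_sub {x y : ℝ} {e f : ℕ} (hx : Den d v x e f) (hy : Den d v y e f) :
    Den d v (x - y) e f := by
  simpa [sub_eq_add_neg] using den_add hx (den_neg hy)

lemma den_mono {x : ℝ} {e f e' f' : ℕ} (hx : Den d v x e f) (he : e ≤ e') (hf : f ≤ f') :
    Den d v x e' f' := by
  obtain ⟨a, ha⟩ := hx
  refine ⟨a * d ^ (e' - e) * v ^ (f' - f), ?_⟩
  push_cast
  rw [ha, show (d:ℝ) ^ e' = (d:ℝ) ^ e * (d:ℝ) ^ (e' - e) by rw [← pow_add]; congr 1; omega,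
    show (v:ℝ) ^ f' = (v:ℝ) ^ f * (v:ℝ) ^ (f' - f) by rw [← pow_add]; congr 1; omega]
  ring

lemma den_sum {g : ℕ → ℝ} {s : Finset ℕ} {e f : ℕ} (h : ∀ i ∈ s, Den d v (g i) e f) :
    Den d v (∑ i ∈ s, g i) e f := by
  classical
  induction s using Finset.induction with
  | empty => exact ⟨0, by simp⟩
  | insert _ _ hx ih =>
    rw [Finset.sum_insert hx]
    exact den_add (h _ (Finset.mem_insert_self _ _))
      (ih fun i hi => h i (Finset.mem_insert_of_mem hi))

lemma den_prod {g : ℕ → ℝ} {e f : ℕ → ℕ} {M : ℕ}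
    (h : ∀ i ∈ Finset.range M, Den d v (g i) (e i) (f i)) :
    Den d v (∏ i ∈ Finset.range M, g i) (∑ i ∈ Finset.range M, e i)
      (∑ i ∈ Finset.range M, f i) := by
  induction M with
  | zero => simpa using (den_one : Den d v 1 0 0)
  | succ m ih =>
    rw [Finset.prod_range_succ, Finset.sum_range_succ, Finset.sum_range_succ]
    exact den_mul (ih fun i hi => h i (by simp at hi ⊢; omega))
      (h m (by simp))

lemma den_pow {x : ℝ} {e f : ℕ} (hx : Den d v x e f) (k : ℕ) :
    Den d v (x ^ k) (k * e) (k * f) := by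
  induction k with
  | zero => simpa using (den_one : Den d v 1 0 0)
  | succ m ih =>
    have := den_mul ih hx
    simpa [pow_succ, Nat.succ_mul] using this

end DenAux

namespace DenAux

variable {d : ℤ} {v : ℕ}

lemma dcast_ne (hd2 : 2 ≤ |d|) : ((d : ℝ)) ≠ 0 := by
  have : d ≠ 0 := by rintro rfl; simp at hd2
  exact Int.cast_ne_zero.mpr this

lemma den_q_pow (hd : (d:ℝ) ≠ 0) (m : ℕ) : Den d v ((1/(d:ℝ)) ^ m) m 0 := by
  refine ⟨1, ?_⟩
  push_cast
  rw [pow_zero, mul_one, one_div, inv_pow, inv_mul_cancel₀ (pow_ne_zero _ hd)]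

lemma den_one_sub_q_pow (hd : (d:ℝ) ≠ 0) (m : ℕ) : Den d v (1 - (1/(d:ℝ)) ^ m) m 0 := by
  refine ⟨d ^ m - 1, ?_⟩
  push_cast
  field_simp
  have hdm : (d:ℝ)^m * ((d:ℝ)⁻¹)^m = 1 := by rw [← mul_pow, mul_inv_cancel₀ hd, one_pow]
  linear_combination hdm

lemma den_t {u : ℤ} (hv : (v:ℝ) ≠ 0) : Den d v ((u:ℝ)/v) 0 1 := by
  refine ⟨u, ?_⟩
  push_cast
  field_simp

lemma den_t_factor {u : ℤ} (hd : (d:ℝ) ≠ 0) (hv : (v:ℝ) ≠ 0) (j : ℕ) :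
    Den d v (1 - ((u:ℝ)/v) * (1/(d:ℝ)) ^ j) j 1 := by
  refine ⟨d ^ j * v - u, ?_⟩
  push_cast
  field_simp
  have hdj : (d:ℝ)^j * ((d:ℝ)⁻¹)^j = 1 := by rw [← mul_pow, mul_inv_cancel₀ hd, one_pow]
  linear_combination (u:ℝ) * hdj

lemma den_qPoch_pow (hd : (d:ℝ) ≠ 0) (a M : ℕ) :
    Den d v (qPoch (1/(d:ℝ)) ((1/(d:ℝ))^a) M) (∑ i ∈ Finset.range M, (a + i)) 0 := by
  rw [qPoch]
  have h : ∀ i ∈ Finset.range M,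
      Den d v (1 - (1/(d:ℝ))^a * (1/(d:ℝ))^i) (a + i) ((fun _ => 0) i) := by
    intro i _
    rw [← pow_add]
    exact den_one_sub_q_pow hd _
  simpa using den_prod h

lemma den_qPoch_t {u : ℤ} (hd : (d:ℝ) ≠ 0) (hv : (v:ℝ) ≠ 0) (K : ℕ) :
    Den d v (qPoch (1/(d:ℝ)) ((u:ℝ)/v) K) (∑ j ∈ Finset.range K, j) K := by
  rw [qPoch]
  have h : ∀ j ∈ Finset.range K,
      Den d v (1 - ((u:ℝ)/v) * (1/(d:ℝ))^j) j ((fun _ => 1) j) :=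
    fun j _ => den_t_factor hd hv j
  simpa using den_prod h

lemma abs_q_le (hd2 : 2 ≤ |d|) : |1/(d:ℝ)| ≤ 1/2 := by
  have hd2' : (2:ℝ) ≤ |(d:ℝ)| := by rw [← Int.cast_abs]; exact_mod_cast hd2
  rw [abs_div, abs_one]
  exact one_div_le_one_div_of_le (by norm_num) hd2'

lemma one_sub_q_pow_ne (hd2 : 2 ≤ |d|) {m : ℕ} (hm : 1 ≤ m) :
    (1 : ℝ) - (1/(d:ℝ)) ^ m ≠ 0 := by
  have habs : |1/(d:ℝ)| ≤ 1/2 := abs_q_le hd2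
  have hlt : |(1/(d:ℝ)) ^ m| < 1 := by
    rw [abs_pow]
    calc |1/(d:ℝ)| ^ m ≤ |1/(d:ℝ)| ^ 1 :=
          pow_le_pow_of_le_one (abs_nonneg _) (le_trans habs (by norm_num)) hm
      _ = |1/(d:ℝ)| := pow_one _
      _ ≤ 1/2 := habs
      _ < 1 := by norm_num
  intro h
  rw [sub_eq_zero] at h
  rw [← h] at hlt
  simp at hlt

lemma qPoch_q_ne (hd2 : 2 ≤ |d|) (m : ℕ) : qPoch (1/(d:ℝ)) (1/(d:ℝ)) m ≠ 0 := by
  rw [qPoch]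
  rw [Finset.prod_ne_zero_iff]
  intro j _
  rw [← pow_succ']
  exact one_sub_q_pow_ne hd2 (by omega)

lemma qPoch_zero (q a : ℝ) : qPoch q a 0 = 1 := by simp [qPoch]

lemma qPoch_q_succ (hd2 : 2 ≤ |d|) (m : ℕ) :
    qPoch (1/(d:ℝ)) (1/(d:ℝ)) (m+1)
      = qPoch (1/(d:ℝ)) (1/(d:ℝ)) m * (1 - (1/(d:ℝ))^(m+1)) := by
  rw [qPoch, qPoch, Finset.prod_range_succ, pow_succ']

lemma qBinom_zero (hd2 : 2 ≤ |d|) (n : ℕ) : qBinom (1/(d:ℝ)) n 0 = 1 := by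
  rw [qBinom, qPoch_zero, Nat.sub_zero, one_mul, div_self (qPoch_q_ne hd2 n)]

lemma qBinom_self (hd2 : 2 ≤ |d|) (n : ℕ) : qBinom (1/(d:ℝ)) n n = 1 := by
  rw [qBinom, Nat.sub_self, qPoch_zero, mul_one, div_self (qPoch_q_ne hd2 n)]

lemma pascal (hd2 : 2 ≤ |d|) {n k : ℕ} (h : k + 1 ≤ n) :
    qBinom (1/(d:ℝ)) (n+1) (k+1)
      = qBinom (1/(d:ℝ)) n k + (1/(d:ℝ))^(k+1) * qBinom (1/(d:ℝ)) n (k+1) := by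
  obtain ⟨j, hj⟩ : ∃ j, n - k = j + 1 := ⟨n - k - 1, by omega⟩
  have e1 : n + 1 - (k + 1) = j + 1 := by omega
  have e3 : n - (k+1) = j := by omega
  rw [qBinom, qBinom, qBinom, e1, hj, e3,
    qPoch_q_succ hd2 n, qPoch_q_succ hd2 k, qPoch_q_succ hd2 j]
  have hab : (1/(d:ℝ))^(k+1) * (1/(d:ℝ))^(j+1) = (1/(d:ℝ))^(n+1) := by
    rw [← pow_add]; congr 1; omega
  rw [← hab]
  have hB := qPoch_q_ne hd2 k
  have hC := qPoch_q_ne hd2 j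
  have hf1 := one_sub_q_pow_ne (d := d) hd2 (m := k+1) (by omega)
  have hf2 := one_sub_q_pow_ne (d := d) hd2 (m := j+1) (by omega)
  set A := qPoch (1/(d:ℝ)) (1/(d:ℝ)) n with hA
  set B := qPoch (1/(d:ℝ)) (1/(d:ℝ)) k with hB'
  set C := qPoch (1/(d:ℝ)) (1/(d:ℝ)) j with hC'
  set a := (1/(d:ℝ))^(k+1) with ha'
  set b := (1/(d:ℝ))^(j+1) with hb'
  field_simp
  ring

lemma den_qBinom (hd2 : 2 ≤ |d|) : ∀ n k : ℕ, k ≤ n →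
    Den d v (qBinom (1/(d:ℝ)) n k) (k * (n - k)) 0 := by
  intro n
  induction n with
  | zero =>
    intro k hk
    have : k = 0 := by omega
    subst this
    rw [qBinom_zero hd2]
    simpa using (den_one : Den d v 1 0 0)
  | succ n ih =>
    intro k hk
    rcases k with _ | k
    · rw [qBinom_zero hd2]
      simpa using (den_one : Den d v 1 0 0)
    · rcases eq_or_lt_of_le hk with heq | hlt
      · rw [heq, qBinom_self hd2]
        exact den_mono den_one (by omega) (by omega)
      · have hk1 : k + 1 ≤ n := by omega
        rw [pascal hd2 hk1]
        apply den_add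
        · refine den_mono (ih k (by omega)) ?_ le_rfl
          have : n + 1 - (k + 1) = n - k := by omega
          rw [this]
          exact Nat.mul_le_mul_right _ (by omega)
        · have hm := den_mul (den_q_pow (dcast_ne hd2) (k+1)) (ih (k+1) hk1)
          refine den_mono hm ?_ (by omega)
          rw [show n + 1 - (k+1) = (n - (k+1)) + 1 from by omega, Nat.mul_succ]
          exact le_of_eq (by ring)

end DenAux

namespace DenAux

lemma nat_sq_sub (m : ℕ) : m ^ 2 - m = m * (m - 1) := by
  cases m with
  | zero => simp
  | succ p =>
    rw [Nat.succ_sub_one]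
    exact Nat.sub_eq_of_eq_add (by ring)

lemma two_dvd_consec (m : ℕ) : 2 ∣ m * (m - 1) := by
  rcases Nat.even_or_odd m with ⟨a, ha⟩ | ⟨a, ha⟩
  · exact Dvd.dvd.mul_right ⟨a, by omega⟩ _
  · exact Dvd.dvd.mul_left ⟨a, by omega⟩ _

lemma half_sq (m : ℕ) : 2 * ((m ^ 2 - m) / 2) = m ^ 2 - m := by
  rw [nat_sq_sub]
  exact Nat.mul_div_cancel' (two_dvd_consec m)

lemma half_consec (k : ℕ) : 2 * (k * (k - 1) / 2) = k ^ 2 - k := by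
  rw [← nat_sq_sub]
  exact half_sq k

lemma half_3sq (n : ℕ) : 2 * ((3 * n ^ 2 + n) / 2) = 3 * n ^ 2 + n := by
  refine Nat.mul_div_cancel' ?_
  rcases Nat.even_or_odd n with ⟨a, ha⟩ | ⟨a, ha⟩
  · exact ⟨6 * a ^ 2 + a, by subst ha; ring⟩
  · exact ⟨6 * a ^ 2 + 7 * a + 2, by subst ha; ring⟩

lemma int_consec (x : ℤ) : 0 ≤ x * (x - 1) := by
  rcases le_or_gt x 0 with h | h
  · nlinarith [mul_nonneg (neg_nonneg.2 h) (neg_nonneg.2 (show x - 1 ≤ 0 from by omega))]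
  · exact mul_nonneg (by omega) (by omega)

lemma sum_shift (c m : ℕ) :
    2 * (∑ i ∈ Finset.range m, (c + i)) = 2 * (m * c) + (m ^ 2 - m) := by
  rw [Finset.sum_add_distrib, Finset.sum_const, Finset.card_range, smul_eq_mul,
    nat_sq_sub, ← Finset.sum_range_id_mul_two m]
  ring

lemma ineqA (n K k : ℕ) (hk : k ≤ n) :
    k * (n - k) + k * n + (∑ i ∈ Finset.range (n - k), (n + 1 + i)) + k * K
      ≤ deltaA n K := by
  obtain ⟨j, rfl⟩ : ∃ j, n = k + j := ⟨n - k, by omega⟩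
  rw [show k + j - k = j from by omega]
  have h1 := sum_shift (k + j + 1) j
  refine Nat.le_of_mul_le_mul_left ?_ (show 0 < 2 from by norm_num)
  have e2 : 2 * (k * j + k * (k + j) + (∑ i ∈ Finset.range j, (k + j + 1 + i)) + k * K)
      = 2 * (k * j) + 2 * (k * (k + j)) + (2 * (j * (k + j + 1)) + (j ^ 2 - j))
        + 2 * (k * K) := by
    rw [Nat.mul_add, Nat.mul_add, Nat.mul_add, h1]
  rw [e2, deltaA]
  split_ifs with hKn
  · rw [show 2 * ((K ^ 2 - K) / 2 + (3 * (k + j) ^ 2 + (k + j)) / 2)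
        = (K ^ 2 - K) + (3 * (k + j) ^ 2 + (k + j)) from by
      rw [Nat.mul_add, half_sq, half_3sq]]
    zify [Nat.le_self_pow two_ne_zero K, Nat.le_self_pow two_ne_zero j] at hKn ⊢
    nlinarith [int_consec ((K : ℤ) - k)]
  · rw [show 2 * ((K ^ 2 - K) / 2 + ((k + j) ^ 2 - (k + j)) / 2 + (k + j) * K)
        = (K ^ 2 - K) + ((k + j) ^ 2 - (k + j)) + 2 * ((k + j) * K) from by
      rw [Nat.mul_add, Nat.mul_add, half_sq, half_sq]]
    have hK' : k + j + 1 ≤ K := by omega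
    zify [Nat.le_self_pow two_ne_zero K, Nat.le_self_pow two_ne_zero j,
      Nat.le_self_pow two_ne_zero (k + j)] at hK' ⊢
    have hm : (0 : ℤ) ≤ (K : ℤ) - k - j - 1 := by linarith
    nlinarith [sq_nonneg ((K : ℤ) - k - j - 1), mul_nonneg (show (0:ℤ) ≤ (k:ℤ) from by positivity) hm,
      mul_nonneg (show (0:ℤ) ≤ (j:ℤ) from by positivity) hm]

lemma ineqB (n K k : ℕ) (hk : k ≤ n) :
    (∑ i ∈ Finset.range K, i)
      + (k * (n - k) + k * (k - 1) / 2 + (∑ i ∈ Finset.range (n - k), (n + 1 + i)) + k * K)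
      ≤ deltaA n K := by
  obtain ⟨j, rfl⟩ : ∃ j, n = k + j := ⟨n - k, by omega⟩
  rw [show k + j - k = j from by omega]
  have h1 := sum_shift (k + j + 1) j
  have h2 : 2 * (∑ i ∈ Finset.range K, i) = K ^ 2 - K := by
    rw [nat_sq_sub, ← Finset.sum_range_id_mul_two K]; ring
  refine Nat.le_of_mul_le_mul_left ?_ (show 0 < 2 from by norm_num)
  have e2 : 2 * ((∑ i ∈ Finset.range K, i)
        + (k * j + k * (k - 1) / 2 + (∑ i ∈ Finset.range j, (k + j + 1 + i)) + k * K))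
      = (K ^ 2 - K) + (2 * (k * j) + (k ^ 2 - k) + (2 * (j * (k + j + 1)) + (j ^ 2 - j))
        + 2 * (k * K)) := by
    rw [Nat.mul_add, Nat.mul_add, Nat.mul_add, Nat.mul_add, h1, h2, half_consec]
  rw [e2, deltaA]
  split_ifs with hKn
  · rw [show 2 * ((K ^ 2 - K) / 2 + (3 * (k + j) ^ 2 + (k + j)) / 2)
        = (K ^ 2 - K) + (3 * (k + j) ^ 2 + (k + j)) from by
      rw [Nat.mul_add, half_sq, half_3sq]]
    zify [Nat.le_self_pow two_ne_zero K, Nat.le_self_pow two_ne_zero j,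
      Nat.le_self_pow two_ne_zero k] at hKn ⊢
    nlinarith [mul_nonneg (show (0:ℤ) ≤ (k:ℤ) from by positivity)
      (show (0:ℤ) ≤ (k:ℤ) + j + 1 - K from by linarith)]
  · rw [show 2 * ((K ^ 2 - K) / 2 + ((k + j) ^ 2 - (k + j)) / 2 + (k + j) * K)
        = (K ^ 2 - K) + ((k + j) ^ 2 - (k + j)) + 2 * ((k + j) * K) from by
      rw [Nat.mul_add, Nat.mul_add, half_sq, half_sq]]
    have hK' : k + j + 1 ≤ K := by omega
    zify [Nat.le_self_pow two_ne_zero K, Nat.le_self_pow two_ne_zero j,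
      Nat.le_self_pow two_ne_zero k, Nat.le_self_pow two_ne_zero (k + j)] at hK' ⊢
    nlinarith [mul_nonneg (show (0:ℤ) ≤ (j:ℤ) from by positivity)
      (show (0:ℤ) ≤ (K:ℤ) - k - j - 1 from by linarith)]

end DenAux


/-- denominator bound, case (a):
`v^{n+K} |d|^{δ_{n,K}} (N A_n(q^K t) - M (t)_K B_n(q^K t))` is an integer. -/
theorem denominator_bound_case_a (d : ℤ) (hd : 2 ≤ |d|) (u : ℤ) (v : ℕ) (hv : 1 ≤ v)
    (hco : Int.gcd u v = 1) (ht0 : 0 < |(u : ℝ) / v|) (ht1 : |(u : ℝ) / v| < 1)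
    (M N : ℤ) (n K : ℕ) :
    ∃ z : ℤ, (z : ℝ) =
      (v : ℝ) ^ (n + K) * |(d : ℝ)| ^ deltaA n K *
        ((N : ℝ) * padeA (1 / (d : ℝ)) n ((1 / (d : ℝ)) ^ K * ((u : ℝ) / v)) -
          (M : ℝ) * qPoch (1 / (d : ℝ)) ((u : ℝ) / v) K *
            padeB (1 / (d : ℝ)) n ((1 / (d : ℝ)) ^ K * ((u : ℝ) / v))) := by
  classical
  have hdR : (d : ℝ) ≠ 0 := DenAux.dcast_ne hd
  have hvR : (v : ℝ) ≠ 0 := Nat.cast_ne_zero.mpr (by omega)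
  have ht' : DenAux.Den d v ((1 / (d : ℝ)) ^ K * ((u : ℝ) / v)) K 1 := by
    simpa using DenAux.den_mul (DenAux.den_q_pow (v := v) hdR K) (DenAux.den_t (u := u) hvR)
  have hA : DenAux.Den d v (padeA (1 / (d : ℝ)) n ((1 / (d : ℝ)) ^ K * ((u : ℝ) / v)))
      (deltaA n K) (n + K) := by
    rw [padeA]
    refine DenAux.den_sum ?_
    intro k hk
    have hk' : k ≤ n := by simp only [Finset.mem_range] at hk; omega
    have h1 := DenAux.den_qBinom (v := v) hd n k hk'
    have h2 := DenAux.den_q_pow (v := v) hdR (k * n)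
    have h3 := DenAux.den_qPoch_pow (v := v) hdR (n + 1) (n - k)
    have h4 := DenAux.den_pow ht' k
    have hprod := DenAux.den_mul (DenAux.den_mul (DenAux.den_mul h1 h2) h3) h4
    refine DenAux.den_mono hprod ?_ ?_
    · exact DenAux.ineqA n K k hk'
    · omega
  have hB : DenAux.Den d v (qPoch (1 / (d : ℝ)) ((u : ℝ) / v) K *
      padeB (1 / (d : ℝ)) n ((1 / (d : ℝ)) ^ K * ((u : ℝ) / v))) (deltaA n K) (n + K) := by
    rw [padeB, Finset.mul_sum]
    refine DenAux.den_sum ?_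
    intro k hk
    have hk' : k ≤ n := by simp only [Finset.mem_range] at hk; omega
    have h0 := DenAux.den_qPoch_t (u := u) hdR hvR K
    have h1 := DenAux.den_qBinom (v := v) hd n k hk'
    have h2 := DenAux.den_q_pow (v := v) hdR (k * (k - 1) / 2)
    have h3 := DenAux.den_qPoch_pow (v := v) hdR (n + 1) (n - k)
    have h4 := DenAux.den_pow (DenAux.den_neg ht') k
    have hprod := DenAux.den_mul h0
      (DenAux.den_mul (DenAux.den_mul (DenAux.den_mul h1 h2) h3) h4)
    refine DenAux.den_mono hprod ?_ ?_
    · exact DenAux.ineqB n K k hk'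
    · omega
  have hN := DenAux.den_mul (DenAux.den_int (d := d) (v := v) N) hA
  have hM := DenAux.den_mul (DenAux.den_int (d := d) (v := v) M) hB
  have hfin := DenAux.den_sub hN hM
  obtain ⟨z, hz⟩ := hfin
  rcases abs_choice ((d : ℝ)) with h | h
  · refine ⟨z, ?_⟩
    rw [hz, h]
    simp only [zero_add]
    ring
  · refine ⟨(-1) ^ (deltaA n K) * z, ?_⟩
    push_cast
    rw [hz, h]
    simp only [zero_add]
    ring
end

section
/- Denominator bound (case b): let q = 1/d with |d| ≥ 2 an integer, t = u/v with gcd(u,v) = 1, v ≥ 1, 0 < |t| < 1, N ∈ ℤ, M = d^s with s ∈ ℤ_+. If K > n assume s ≥ K(K−1)/2 − n(n+1)/2. Then v^{n+K} |d|^{δ_{n,K}} · (N A_n(q^K t) − d^s (t)_K B_n(q^K t)) ∈ ℤ, where δ_{n,K} = (K^2−K)/2 + (3n^2+n)/2 if 0 ≤ K ≤ n and δ_{n,K} = n^2 + nK if K > n. -/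
open Finset

/-- Exponent `δ_{n,K}` in case (b). -/
def deltaB (n K : ℕ) : ℕ :=
  if K ≤ n then (K ^ 2 - K) / 2 + (3 * n ^ 2 + n) / 2 else n ^ 2 + n * K

/-! ### Auxiliary lemmas -/

section Aux

variable {q : ℝ} (hq : ∀ m : ℕ, 1 ≤ m → (1:ℝ) - q ^ m ≠ 0)
include hq

lemma aux_qPoch_ne_zero (r : ℕ) : qPoch q q r ≠ 0 := by
  unfold qPoch
  refine Finset.prod_ne_zero_iff.2 fun j _ => ?_
  have := hq (j+1) (by omega)
  rw [pow_succ'] at this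
  exact this

lemma aux_qBinom_zero (m : ℕ) : qBinom q m 0 = 1 := by
  unfold qBinom
  simp only [Nat.sub_zero]
  rw [show qPoch q q 0 = 1 by simp [qPoch]]
  rw [one_mul, div_self (aux_qPoch_ne_zero hq m)]

lemma aux_qBinom_self (m : ℕ) : qBinom q m m = 1 := by
  unfold qBinom
  simp only [Nat.sub_self]
  rw [show qPoch q q 0 = 1 by simp [qPoch]]
  rw [mul_one, div_self (aux_qPoch_ne_zero hq m)]

omit hq in
lemma aux_qPoch_succ (r : ℕ) : qPoch q q (r+1) = qPoch q q r * (1 - q * q ^ r) := by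
  unfold qPoch; rw [Finset.prod_range_succ]

lemma aux_pascal (a b : ℕ) :
    qBinom q (a+b+2) (a+1) = q ^ (a+1) * qBinom q (a+b+1) (a+1) + qBinom q (a+b+1) a := by
  unfold qBinom
  have h1 : a+b+2-(a+1) = b+1 := by omega
  have h2 : a+b+1-(a+1) = b := by omega
  have h3 : a+b+1-a = b+1 := by omega
  rw [h1, h2, h3]
  rw [aux_qPoch_succ (a+b+1), aux_qPoch_succ (a+b), aux_qPoch_succ b, aux_qPoch_succ a]
  have Pa := aux_qPoch_ne_zero hq a
  have Pb := aux_qPoch_ne_zero hq b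
  have Pab := aux_qPoch_ne_zero hq (a+b)
  have h4 : (1:ℝ) - q * q ^ a ≠ 0 := by have := hq (a+1) (by omega); rwa [pow_succ'] at this
  have h5 : (1:ℝ) - q * q ^ b ≠ 0 := by have := hq (b+1) (by omega); rwa [pow_succ'] at this
  have h6 : (1:ℝ) - q * q ^ (a+b) ≠ 0 := by
    have := hq (a+b+1) (by omega); rwa [pow_succ'] at this
  have h7 : (1:ℝ) - q * q ^ (a+b+1) ≠ 0 := by
    have := hq (a+b+2) (by omega); rwa [pow_succ'] at this
  field_simp
  ring

end Aux

lemma aux_gauss (d : ℤ) (hd0 : (d:ℝ) ≠ 0)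
    (hq : ∀ m : ℕ, 1 ≤ m → (1:ℝ) - (1/(d:ℝ)) ^ m ≠ 0) :
    ∀ n k : ℕ, k ≤ n → ∃ g : ℤ, (g:ℝ) = (d:ℝ) ^ (k*(n-k)) * qBinom (1/(d:ℝ)) n k := by
  intro n
  induction n with
  | zero =>
    intro k hk
    interval_cases k
    exact ⟨1, by rw [aux_qBinom_zero hq]; norm_num⟩
  | succ n ih =>
    intro k hk
    rcases Nat.eq_zero_or_pos k with rfl | hk1
    · exact ⟨1, by rw [aux_qBinom_zero hq]; norm_num⟩
    rcases eq_or_lt_of_le hk with rfl | hk2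
    · exact ⟨1, by rw [aux_qBinom_self hq]; norm_num⟩
    obtain ⟨a, rfl⟩ : ∃ a, k = a + 1 := ⟨k-1, by omega⟩
    obtain ⟨b, hb⟩ : ∃ b, n = a + 1 + b := ⟨n - (a+1), by omega⟩
    subst hb
    obtain ⟨g1, hg1⟩ := ih (a+1) (by omega)
    obtain ⟨g2, hg2⟩ := ih a (by omega)
    refine ⟨g1 + d ^ (b+1) * g2, ?_⟩
    have hp := aux_pascal hq a b
    rw [show a+b+2 = a+1+b+1 from by omega, show a+b+1 = a+1+b from by omega] at hp
    have e1 : a + 1 + b - (a+1) = b := by omega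
    have e2 : a + 1 + b - a = b + 1 := by omega
    rw [e1] at hg1
    rw [e2] at hg2
    have e3 : a + 1 + b + 1 - (a + 1) = b + 1 := by omega
    rw [e3, hp]
    push_cast
    rw [hg1, hg2]
    rw [div_pow, one_pow]
    field_simp
    ring

lemma aux_pochClean (d : ℤ) (hd0 : (d:ℝ) ≠ 0) (m r : ℕ) :
    ((∏ j ∈ Finset.range r, (d ^ (m+j) - 1) : ℤ) : ℝ)
      = (d:ℝ) ^ (∑ j ∈ Finset.range r, (m+j)) * qPoch (1/(d:ℝ)) ((1/(d:ℝ))^m) r := by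
  rw [← Finset.prod_pow_eq_pow_sum]
  unfold qPoch
  rw [← Finset.prod_mul_distrib]
  push_cast
  refine Finset.prod_congr rfl fun j _ => ?_
  have h : ((d:ℝ))^(m+j) * ((1/(d:ℝ))^m * (1/(d:ℝ))^j) = 1 := by
    rw [← pow_add]
    field_simp
    rw [← mul_pow, mul_one_div_cancel hd0, one_pow]
  rw [mul_sub, mul_one, h]

lemma aux_tClean (d u : ℤ) (v : ℕ) (hd0 : (d:ℝ) ≠ 0) (hv0 : (v:ℝ) ≠ 0) (K : ℕ) :
    ((∏ j ∈ Finset.range K, ((v:ℤ) * d ^ j - u) : ℤ) : ℝ)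
      = (v:ℝ) ^ K * (d:ℝ) ^ (∑ j ∈ Finset.range K, j) * qPoch (1/(d:ℝ)) ((u:ℝ)/v) K := by
  rw [← Finset.prod_pow_eq_pow_sum]
  unfold qPoch
  rw [show ((v:ℕ):ℝ)^K = ∏ _j ∈ Finset.range K, ((v:ℕ):ℝ) from by
    rw [Finset.prod_const, Finset.card_range]]
  rw [← Finset.prod_mul_distrib, ← Finset.prod_mul_distrib]
  push_cast
  refine Finset.prod_congr rfl fun j _ => ?_
  rw [one_div, inv_pow]
  field_simp

lemma aux_sumId (m : ℕ) : ∀ r : ℕ, 2 * (∑ j ∈ Finset.range r, (m+j)) + r = 2*r*m + r*r := by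
  intro r
  induction r with
  | zero => simp
  | succ r ih =>
    rw [Finset.sum_range_succ]
    linarith [ih]

lemma aux_sumId0 : ∀ r : ℕ, 2 * (∑ j ∈ Finset.range r, j) + r = r*r := by
  intro r
  induction r with
  | zero => simp
  | succ r ih =>
    rw [Finset.sum_range_succ]
    linarith [ih]

lemma aux_intkey (x y : ℤ) : 2*x*y + x ≤ x*x + y*y + y := by
  rcases le_or_gt x y with h | h
  · nlinarith [mul_self_nonneg (y - x)]
  · nlinarith [mul_self_nonneg (x - y), h]

lemma aux_natkey (x y : ℕ) : 2*x*y + x ≤ x*x + y*y + y := by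
  zify
  exact aux_intkey x y

lemma aux_helperAbs (d : ℤ) (hd' : d ≠ 0) (E F : ℕ) (hEF : E ≤ F) (X : ℝ) (z : ℤ)
    (hz : (z:ℝ) = (d:ℝ)^E * X) : ∃ w : ℤ, (w:ℝ) = |(d:ℝ)|^F * X := by
  have hsgn : d.sign * d = |d| := by
    rcases lt_trichotomy d 0 with h|h|h
    · rw [Int.sign_eq_neg_one_iff_neg.mpr h, abs_of_neg h]; ring
    · exact absurd h hd'
    · rw [Int.sign_eq_one_iff_pos.mpr h, abs_of_pos h]; ring
  refine ⟨d.sign^E * |d|^(F-E) * z, ?_⟩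
  have hF : |(d:ℝ)|^F = |(d:ℝ)|^(F-E) * |(d:ℝ)|^E := by
    rw [← pow_add]; congr 1; omega
  have h1 : ((d.sign:ℤ):ℝ) * (d:ℝ) = |(d:ℝ)| := by
    rw [← Int.cast_mul, hsgn, Int.cast_abs]
  push_cast
  rw [hz, hF]
  rw [← h1]
  push_cast
  ring

/-- Integrality of the cleaned `A`-term. -/
lemma aux_cleanA (d u : ℤ) (v : ℕ) (hd0 : (d:ℝ) ≠ 0) (hv0 : (v:ℝ) ≠ 0)
    (hq : ∀ m : ℕ, 1 ≤ m → (1:ℝ) - (1/(d:ℝ)) ^ m ≠ 0)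
    (n K k : ℕ) (hk : k ≤ n) :
    ∃ z : ℤ, (z:ℝ) = (d:ℝ) ^ (k*(n-k) + (k*n + K*k) + ∑ j ∈ Finset.range (n-k), (n+1+j))
      * ((v:ℝ)^k * (qBinom (1/(d:ℝ)) n k * (1/(d:ℝ))^(k*n)
          * qPoch (1/(d:ℝ)) ((1/(d:ℝ))^(n+1)) (n-k)
          * ((1/(d:ℝ))^K * ((u:ℝ)/v))^k)) := by
  obtain ⟨g, hg⟩ := aux_gauss d hd0 hq n k hk
  have hp := aux_pochClean d hd0 (n+1) (n-k)
  refine ⟨g * u^k * (∏ j ∈ Finset.range (n-k), (d^(n+1+j) - 1)), ?_⟩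
  rw [Int.cast_mul, Int.cast_mul, hg, hp, pow_add, pow_add]
  push_cast
  simp only [mul_pow, div_pow, one_pow]
  field_simp
  ring

/-- Integrality of the cleaned `B`-term. -/
lemma aux_cleanB (d u : ℤ) (v : ℕ) (hd0 : (d:ℝ) ≠ 0) (hv0 : (v:ℝ) ≠ 0)
    (hq : ∀ m : ℕ, 1 ≤ m → (1:ℝ) - (1/(d:ℝ)) ^ m ≠ 0)
    (n K k : ℕ) (hk : k ≤ n) :
    ∃ z : ℤ, (z:ℝ) = (d:ℝ) ^ (k*(n-k) + (k*(k-1)/2 + K*k) + ∑ j ∈ Finset.range (n-k), (n+1+j))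
      * ((v:ℝ)^k * (qBinom (1/(d:ℝ)) n k * (1/(d:ℝ))^(k*(k-1)/2)
          * qPoch (1/(d:ℝ)) ((1/(d:ℝ))^(n+1)) (n-k)
          * (-((1/(d:ℝ))^K * ((u:ℝ)/v)))^k)) := by
  obtain ⟨g, hg⟩ := aux_gauss d hd0 hq n k hk
  have hp := aux_pochClean d hd0 (n+1) (n-k)
  refine ⟨g * (-u)^k * (∏ j ∈ Finset.range (n-k), (d^(n+1+j) - 1)), ?_⟩
  rw [Int.cast_mul, Int.cast_mul, hg, hp, pow_add, pow_add]
  rw [show (-((1/(d:ℝ))^K * ((u:ℝ)/v)))^k = (-1)^k * ((1/(d:ℝ))^K * ((u:ℝ)/v))^k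
    from by rw [neg_pow]]
  push_cast
  rw [show (-(u:ℝ))^k = (-1)^k * (u:ℝ)^k from by rw [neg_pow]]
  simp only [mul_pow, div_pow, one_pow]
  field_simp
  ring

lemma aux_evenKK (K : ℕ) : Even (K^2 - K) := by
  rw [Nat.even_sub (Nat.le_self_pow two_ne_zero K)]
  simp [Nat.even_pow]

lemma aux_even3n (n : ℕ) : Even (3*n^2 + n) := by
  obtain ⟨m, hm | hm⟩ := Nat.even_or_odd' n
  · exact ⟨6*m^2+m, by subst hm; ring⟩
  · exact ⟨6*m^2+7*m+2, by subst hm; ring⟩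

lemma aux_kk1 (k : ℕ) : k*(k-1) + k = k*k := by
  cases k with
  | zero => simp
  | succ m => simp [Nat.succ_sub_one]; ring

/-- exponent bound for the `A`-terms -/
lemma aux_ineqA (n K k : ℕ) (hk : k ≤ n) :
    k*(n-k) + (k*n + K*k) + (∑ j ∈ Finset.range (n-k), (n+1+j)) ≤ deltaB n K := by
  obtain ⟨j, rfl⟩ : ∃ j, n = k + j := ⟨n-k, by omega⟩
  have e : k + j - k = j := by omega
  rw [e]
  have hS := aux_sumId (k+j+1) j
  unfold deltaB
  split_ifs with hcase
  · have h1 : 2*((K^2-K)/2) = K^2-K := Nat.two_mul_div_two_of_even (aux_evenKK K)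
    have h2 : 2*((3*(k+j)^2+(k+j))/2) = 3*(k+j)^2+(k+j) :=
      Nat.two_mul_div_two_of_even (aux_even3n (k+j))
    have h3 : K^2 - K + K = K^2 := Nat.sub_add_cancel (Nat.le_self_pow two_ne_zero K)
    have key := aux_natkey K k
    nlinarith [hS, h1, h2, h3, key]
  · have hKn : k + j + 1 ≤ K := by omega
    have key : j*(k+j+1) ≤ j*K := Nat.mul_le_mul_left j hKn
    nlinarith [hS, key]

/-- exponent bound for the `B`-terms -/
lemma aux_ineqB (n K k s : ℕ) (hk : k ≤ n)
    (hsK : n < K → ((K : ℤ) * (K - 1)) / 2 - ((n : ℤ) * (n + 1)) / 2 ≤ (s : ℤ)) :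
    (∑ j ∈ Finset.range K, j) + (k*(n-k) + (k*(k-1)/2 + K*k)
        + (∑ j ∈ Finset.range (n-k), (n+1+j))) ≤ deltaB n K + s := by
  have hσ := aux_sumId0 K
  have hT : 2*(k*(k-1)/2) = k*(k-1) := Nat.two_mul_div_two_of_even (Nat.even_mul_pred_self k)
  have hTk := aux_kk1 k
  obtain ⟨j, rfl⟩ : ∃ j, n = k + j := ⟨n-k, by omega⟩
  have e : k + j - k = j := by omega
  rw [e]
  have hS := aux_sumId (k+j+1) j
  unfold deltaB
  split_ifs with hcase
  · have h1 : 2*((K^2-K)/2) = K^2-K := Nat.two_mul_div_two_of_even (aux_evenKK K)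
    have h2 : 2*((3*(k+j)^2+(k+j))/2) = 3*(k+j)^2+(k+j) :=
      Nat.two_mul_div_two_of_even (aux_even3n (k+j))
    have h3 : K^2 - K + K = K^2 := Nat.sub_add_cancel (Nat.le_self_pow two_ne_zero K)
    have key : k*K ≤ k*(k+j) := Nat.mul_le_mul_left k hcase
    nlinarith [hσ, hT, hTk, hS, h1, h2, h3, key]
  · have hKn : k + j < K := by omega
    have hz := hsK hKn
    have hev1 : (2:ℤ) ∣ (K:ℤ) * ((K:ℤ) - 1) := by
      have h := Int.even_mul_succ_self ((K:ℤ) - 1)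
      rw [show ((K:ℤ) - 1) + 1 = (K:ℤ) from by ring] at h
      rw [mul_comm] at h
      exact h.two_dvd
    have hev2 : (2:ℤ) ∣ ((k:ℤ)+(j:ℤ)) * (((k:ℤ)+(j:ℤ)) + 1) :=
      (Int.even_mul_succ_self _).two_dvd
    have hd1 : 2 * (((K:ℤ) * ((K:ℤ) - 1)) / 2) = (K:ℤ) * ((K:ℤ) - 1) :=
      Int.mul_ediv_cancel' hev1
    have hd2 : 2 * ((((k:ℤ)+(j:ℤ)) * (((k:ℤ)+(j:ℤ)) + 1)) / 2)
        = ((k:ℤ)+(j:ℤ)) * (((k:ℤ)+(j:ℤ)) + 1) := Int.mul_ediv_cancel' hev2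
    have hz' : (K:ℤ) * ((K:ℤ) - 1) ≤ 2*(s:ℤ) + ((k:ℤ)+(j:ℤ)) * (((k:ℤ)+(j:ℤ)) + 1) := by
      push_cast at hz
      omega
    have hKK : K*(K-1) ≤ 2*s + (k+j)*((k+j)+1) := by
      have h1K : 1 ≤ K := by omega
      zify [h1K]
      exact hz'
    have hKex : K*(K-1) + K = K*K := by
      cases K with
      | zero => simp
      | succ m => simp [Nat.succ_sub_one]; ring
    have key : j*(k+j+1) ≤ j*K := Nat.mul_le_mul_left j (by omega)
    linarith [hσ, hT, hTk, hS, hKK, hKex, key]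

/-- denominator bound, case (b), with `M = d^s` and, when `K > n`,
`s ≥ K(K-1)/2 - n(n+1)/2`. -/
theorem denominator_bound_case_b (d : ℤ) (hd : 2 ≤ |d|) (u : ℤ) (v : ℕ) (hv : 1 ≤ v)
    (hco : Int.gcd u v = 1) (ht0 : 0 < |(u : ℝ) / v|) (ht1 : |(u : ℝ) / v| < 1)
    (N : ℤ) (s : ℕ) (hs : 1 ≤ s) (n K : ℕ)
    (hsK : n < K → ((K : ℤ) * (K - 1)) / 2 - ((n : ℤ) * (n + 1)) / 2 ≤ (s : ℤ)) :
    ∃ z : ℤ, (z : ℝ) =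
      (v : ℝ) ^ (n + K) * |(d : ℝ)| ^ deltaB n K *
        ((N : ℝ) * padeA (1 / (d : ℝ)) n ((1 / (d : ℝ)) ^ K * ((u : ℝ) / v)) -
          (d : ℝ) ^ s * qPoch (1 / (d : ℝ)) ((u : ℝ) / v) K *
            padeB (1 / (d : ℝ)) n ((1 / (d : ℝ)) ^ K * ((u : ℝ) / v))) := by
  have hd' : d ≠ 0 := fun h => by simp [h] at hd
  have hd0 : (d:ℝ) ≠ 0 := Int.cast_ne_zero.2 hd'
  have hv0 : (v:ℝ) ≠ 0 := by positivity
  have habs : (2:ℝ) ≤ |(d:ℝ)| := by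
    rw [← Int.cast_abs]; exact_mod_cast hd
  have hq : ∀ m : ℕ, 1 ≤ m → (1:ℝ) - (1/(d:ℝ)) ^ m ≠ 0 := by
    intro m hm
    have hlt : |1/(d:ℝ)| < 1 := by
      rw [abs_div, abs_one]
      rw [div_lt_one (by linarith)]
      linarith
    have h1 : |(1/(d:ℝ))^m| < 1 := by
      rw [abs_pow]
      exact pow_lt_one₀ (abs_nonneg _) hlt (by omega)
    intro hcon
    have : (1/(d:ℝ))^m = 1 := by linarith [sub_eq_zero.1 hcon]
    rw [this] at h1
    simp at h1
  -- reduce to subring membership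
  set R : Subring ℝ := (Int.castRingHom ℝ).range with hR
  have hmem : ∀ x : ℝ, x ∈ R → ∃ z : ℤ, (z:ℝ) = x := by
    intro x hx
    obtain ⟨z, hz⟩ := hx
    exact ⟨z, hz⟩
  apply hmem
  unfold padeA padeB
  rw [mul_sub]
  simp only [Finset.mul_sum]
  rw [← Finset.sum_sub_distrib]
  refine Subring.sum_mem _ fun k hk => ?_
  have hkn : k ≤ n := by simp at hk; omega
  refine sub_mem ?_ ?_
  · -- A-term
    obtain ⟨zA, hzA⟩ := aux_cleanA d u v hd0 hv0 hq n K k hkn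
    obtain ⟨w, hw⟩ := aux_helperAbs d hd' _ (deltaB n K) (aux_ineqA n K k hkn) _ zA hzA
    refine ⟨N * (v:ℤ)^(n+K-k) * w, ?_⟩
    rw [eq_intCast]
    push_cast
    rw [hw]
    rw [show ((v:ℕ):ℝ)^(n+K) = ((v:ℕ):ℝ)^(n+K-k) * ((v:ℕ):ℝ)^k from by
      rw [← pow_add]; congr 1; omega]
    ring
  · -- B-term
    obtain ⟨zB, hzB⟩ := aux_cleanB d u v hd0 hv0 hq n K k hkn
    have hzt := aux_tClean d u v hd0 hv0 K
    set zt : ℤ := ∏ j ∈ Finset.range K, ((v:ℤ) * d ^ j - u) with hzt_def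
    have hcomb : ((zt * zB : ℤ):ℝ)
        = (d:ℝ) ^ ((∑ j ∈ Finset.range K, j) + (k*(n-k) + (k*(k-1)/2 + K*k)
            + ∑ j ∈ Finset.range (n-k), (n+1+j)))
          * ((v:ℝ)^(K+k) * (qPoch (1/(d:ℝ)) ((u:ℝ)/v) K
            * (qBinom (1/(d:ℝ)) n k * (1/(d:ℝ))^(k*(k-1)/2)
              * qPoch (1/(d:ℝ)) ((1/(d:ℝ))^(n+1)) (n-k)
              * (-((1/(d:ℝ))^K * ((u:ℝ)/v)))^k))) := by
      rw [Int.cast_mul, hzt, hzB, pow_add, pow_add]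
      ring
    obtain ⟨w, hw⟩ := aux_helperAbs d hd' _ (deltaB n K + s)
      (aux_ineqB n K k s hkn hsK) _ _ hcomb
    have hds : (d:ℝ)^s = ((d.sign:ℤ):ℝ)^s * |(d:ℝ)|^s := by
      rw [← Int.cast_abs, ← mul_pow, ← Int.cast_mul, Int.sign_mul_abs]
    refine ⟨d.sign^s * (v:ℤ)^(n-k) * w, ?_⟩
    rw [eq_intCast]
    push_cast
    rw [hw, hds]
    rw [pow_add (|(d:ℝ)|)]
    rw [show ((v:ℕ):ℝ)^(n+K) = ((v:ℕ):ℝ)^(n-k) * ((v:ℕ):ℝ)^(K+k) from by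
      rw [← pow_add]; congr 1; omega]
    ring
end

section
/- Polynomial-term estimate: for q = 1/d with |d| ≥ 2 integer and 0 < |t| < 1, max(|A_n(q^K t)|, |(t)_K B_n(q^K t)|) ≤ 8 · max(1, (t)_K) for all n, K ∈ ℤ_+. -/
open Finset

section auxiliaryLemmas

lemma weier {f : ℕ → ℝ} (m : ℕ) (h0 : ∀ j, j < m → 0 ≤ f j) (h1 : ∀ j, j < m → f j ≤ 1) :
    1 - ∑ j ∈ range m, f j ≤ ∏ j ∈ range m, (1 - f j) := by
  induction m with
  | zero => simp
  | succ m ih =>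
    rw [sum_range_succ, prod_range_succ]
    have hp : (0:ℝ) ≤ ∏ j ∈ range m, (1 - f j) :=
      prod_nonneg fun j hj => by have := h1 j ((mem_range.1 hj).trans m.lt_succ_self); linarith
    have hS : (0:ℝ) ≤ ∑ j ∈ range m, f j :=
      sum_nonneg fun j hj => h0 j ((mem_range.1 hj).trans m.lt_succ_self)
    have ih' := ih (fun j hj => h0 j (hj.trans m.lt_succ_self))
      (fun j hj => h1 j (hj.trans m.lt_succ_self))
    have h0m := h0 m m.lt_succ_self
    have h1m := h1 m m.lt_succ_self
    nlinarith [mul_nonneg (sub_nonneg.2 ih') (by linarith : (0:ℝ) ≤ 1 - f m)]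

lemma geomb {x : ℝ} (h0 : 0 ≤ x) (h1 : x < 1) (m : ℕ) :
    ∑ j ∈ range m, x ^ j ≤ (1 - x)⁻¹ := by
  have hx : 0 < 1 - x := by linarith
  induction m with
  | zero =>
    simp only [range_zero, sum_empty]
    positivity
  | succ m ih =>
    rw [sum_range_succ']
    have hpow : ∀ j, x ^ (j+1) = x * x ^ j := fun j => by ring
    simp only [hpow, ← mul_sum, pow_zero]
    have h2 : x * ∑ j ∈ range m, x ^ j ≤ x * (1-x)⁻¹ := mul_le_mul_of_nonneg_left ih h0
    have hid : x * (1 - x)⁻¹ + 1 = (1-x)⁻¹ := by field_simp; ring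
    linarith

lemma prod_one_add_le {f : ℕ → ℝ} (m : ℕ) (h0 : ∀ j, 0 ≤ f j)
    (hS : ∑ j ∈ range m, f j ≤ 1/2) :
    ∏ j ∈ range m, (1 + f j) ≤ (1 - ∑ j ∈ range m, f j)⁻¹ := by
  have h1 : ∀ j, j < m → f j ≤ 1 := fun j hj =>
    le_trans (single_le_sum (fun i _ => h0 i) (mem_range.2 hj)) (by linarith)
  have hw := weier m (fun j _ => h0 j) h1
  have hS0 : (0:ℝ) ≤ ∑ j ∈ range m, f j := sum_nonneg fun j _ => h0 j
  have hSpos : (0:ℝ) < 1 - ∑ j ∈ range m, f j := by linarith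
  have hmul : (∏ j ∈ range m, (1 + f j)) * (∏ j ∈ range m, (1 - f j))
      = ∏ j ∈ range m, (1 - f j ^ 2) := by
    rw [← prod_mul_distrib]; exact prod_congr rfl fun j _ => by ring
  have hle1 : ∏ j ∈ range m, (1 - f j ^ 2) ≤ 1 :=
    prod_le_one (fun j hj => by nlinarith [h0 j, h1 j (mem_range.1 hj)])
      (fun j hj => by nlinarith [h0 j])
  have hPpos : (0:ℝ) ≤ ∏ j ∈ range m, (1 + f j) :=
    prod_nonneg fun j _ => by linarith [h0 j]
  rw [inv_eq_one_div, le_div_iff₀ hSpos]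
  calc (∏ j ∈ range m, (1 + f j)) * (1 - ∑ j ∈ range m, f j)
      ≤ (∏ j ∈ range m, (1 + f j)) * (∏ j ∈ range m, (1 - f j)) :=
        mul_le_mul_of_nonneg_left hw hPpos
    _ = ∏ j ∈ range m, (1 - f j ^ 2) := hmul
    _ ≤ 1 := hle1

lemma geomb2 {x : ℝ} (h0 : 0 ≤ x) (h1 : x ≤ 1/2) (m : ℕ) :
    ∑ j ∈ range m, x ^ j ≤ 2 := by
  refine (geomb h0 (by linarith) m).trans ?_
  rw [show (2:ℝ) = (1/2)⁻¹ by norm_num]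
  exact inv_anti₀ (by norm_num) (by linarith)

lemma pos_factor {q : ℝ} (h0 : 0 < q) (h2 : q ≤ 1/2) {a : ℝ} (ha0 : 0 ≤ a) (ha1 : a ≤ 1)
    (j : ℕ) : 0 ≤ 1 - a * q ^ j ∧ 1 - a * q ^ j ≤ 1 := by
  have hp0 : 0 ≤ q ^ j := pow_nonneg h0.le j
  have hp1 : q ^ j ≤ 1 := pow_le_one₀ h0.le (by linarith)
  constructor <;> nlinarith

section pos
variable {q : ℝ} (h0 : 0 < q) (h2 : q ≤ 1/2)
include h0 h2

lemma pos_poch_ub {a : ℝ} (ha0 : 0 ≤ a) (ha1 : a ≤ 1) (m : ℕ) :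
    qPoch q a m ≤ 1 :=
  prod_le_one (fun j _ => (pos_factor h0 h2 ha0 ha1 j).1)
    (fun j _ => (pos_factor h0 h2 ha0 ha1 j).2)

lemma pos_poch_nonneg {a : ℝ} (ha0 : 0 ≤ a) (ha1 : a ≤ 1) (m : ℕ) :
    0 ≤ qPoch q a m :=
  prod_nonneg fun j _ => (pos_factor h0 h2 ha0 ha1 j).1

lemma pos_poch_lb (m : ℕ) : 1/4 ≤ qPoch q q m := by
  cases m with
  | zero => rw [qPoch]; norm_num
  | succ r =>
    rw [qPoch, prod_range_succ']
    have hre : ∀ j ∈ range r, (1 - q * q ^ (j+1)) = 1 - (q^2) * q ^ j :=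
      fun j _ => by ring
    rw [prod_congr rfl hre]
    have hq1 : q ≤ 1 := by linarith
    have hw := weier (f := fun j => q^2 * q^j) r
      (fun j _ => by positivity)
      (fun j _ => mul_le_one₀ (by nlinarith) (pow_nonneg h0.le j) (pow_le_one₀ h0.le hq1))
    have hs : ∑ j ∈ range r, q^2 * q^j ≤ 2 * q^2 := by
      rw [← mul_sum]
      nlinarith [geomb2 h0.le h2 r, sq_nonneg q]
    have hP : 1 - 2*q^2 ≤ ∏ j ∈ range r, (1 - q^2 * q^j) :=
      le_trans (by linarith) hw
    simp only [pow_zero, mul_one]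
    have h14 : (1:ℝ)/4 ≤ (1 - 2*q^2) * (1 - q) := by
      nlinarith [mul_nonneg (by linarith : (0:ℝ) ≤ 1 - 2*q) (by nlinarith : (0:ℝ) ≤ 3/4 + q/2 - q^2)]
    refine h14.trans (mul_le_mul_of_nonneg_right hP (by linarith))

lemma pos_binom (n k : ℕ) (hk : k ≤ n) : 0 ≤ qBinom q n k ∧ qBinom q n k ≤ 4 := by
  have hPk := pos_poch_lb h0 h2 k
  have hPm := pos_poch_lb h0 h2 (n - k)
  have hq1 : q ≤ 1 := by linarith
  have hn : n = k + (n - k) := (Nat.add_sub_cancel' hk).symm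
  have hfac : ∀ j : ℕ, 0 ≤ 1 - q * q ^ (k + j) ∧ 1 - q * q ^ (k + j) ≤ 1 :=
    fun j => pos_factor h0 h2 h0.le hq1 (k + j)
  have hsplit : qPoch q q n = qPoch q q k * ∏ j ∈ range (n-k), (1 - q * q ^ (k + j)) := by
    rw [qPoch, qPoch]
    conv_lhs => rw [hn]
    rw [prod_range_add]
  have hT0 : 0 ≤ ∏ j ∈ range (n-k), (1 - q * q ^ (k + j)) :=
    prod_nonneg fun j _ => (hfac j).1
  have hT1 : ∏ j ∈ range (n-k), (1 - q * q ^ (k + j)) ≤ 1 :=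
    prod_le_one (fun j _ => (hfac j).1) (fun j _ => (hfac j).2)
  have hPkpos : (0:ℝ) < qPoch q q k := by linarith
  rw [qBinom, hsplit, mul_div_mul_left _ _ hPkpos.ne']
  constructor
  · exact div_nonneg hT0 (by linarith)
  · rw [div_le_iff₀ (by linarith : (0:ℝ) < qPoch q q (n-k))]
    nlinarith

end pos

section neg
variable {q : ℝ} (hql : -(1/2) ≤ q) (hq0 : q < 0)
include hql hq0

lemma neg_pair (i : ℕ) : 1 ≤ (1 - q * q ^ (2*i)) * (1 - q * q ^ (2*i+1)) := by
  set u := q ^ (2*i) with hu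
  have hu0 : 0 ≤ u := Even.pow_nonneg (even_two_mul i) q
  have hu1 : u ≤ 1 := by
    have : |q ^ (2*i)| ≤ 1 := by
      rw [abs_pow]
      exact pow_le_one₀ (abs_nonneg q) (abs_le.2 ⟨by linarith, by linarith⟩)
    calc u ≤ |u| := le_abs_self u
      _ ≤ 1 := this
  have hq2 : q ^ (2*i+1) = u * q := by rw [hu, pow_succ]
  rw [hq2]
  have h3 : 0 ≤ 1 + q - q^2*u := by nlinarith
  nlinarith [mul_nonneg (mul_nonneg (by linarith : (0:ℝ) ≤ -q) hu0) h3]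

lemma neg_poch_one_le (m : ℕ) : 1 ≤ qPoch q q m := by
  have heven : ∀ i : ℕ, 1 ≤ qPoch q q (2*i) := by
    intro i
    induction i with
    | zero => simp [qPoch]
    | succ i ih =>
      have h2 : 2*(i+1) = (2*i+1)+1 := by ring
      rw [h2, qPoch, prod_range_succ, prod_range_succ]
      have hpair := neg_pair hql hq0 i
      have hP : 1 ≤ ∏ j ∈ range (2*i), (1 - q * q ^ j) := ih
      nlinarith [mul_nonneg (sub_nonneg.2 hP) (sub_nonneg.2 hpair)]
  rcases Nat.even_or_odd m with ⟨i, hi⟩ | ⟨i, hi⟩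
  · rw [hi, ← two_mul]; exact heven i
  · rw [hi, qPoch, prod_range_succ]
    have hu0 : 0 ≤ q ^ (2*i) := Even.pow_nonneg (even_two_mul i) q
    have : q * q ^ (2*i) ≤ 0 := mul_nonpos_of_nonpos_of_nonneg hq0.le hu0
    have hP : 1 ≤ ∏ j ∈ range (2*i), (1 - q * q ^ j) := heven i
    nlinarith

lemma neg_poch_le (m : ℕ) : qPoch q q m ≤ 8/5 := by
  match m with
  | 0 => rw [qPoch]; norm_num
  | 1 => rw [qPoch]; simp; linarith
  | (r+2) =>
    rw [qPoch, prod_range_succ', prod_range_succ']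
    have habs : |∏ j ∈ range r, (1 - q * q ^ (j+1+1))| ≤ 4/3 := by
      rw [abs_prod]
      have hb : ∀ j ∈ range r, |1 - q * q ^ (j+1+1)| ≤ 1 + (1/8) * (1/2)^j := by
        intro j _
        have h1 : |q * q ^ (j+2)| ≤ (1/8) * (1/2)^j := by
          rw [abs_mul, abs_pow]
          have hqa : |q| ≤ 1/2 := abs_le.2 ⟨by linarith, by linarith⟩
          have : |q| ^ (j+2) ≤ (1/2) ^ (j+2) := pow_le_pow_left₀ (abs_nonneg q) hqa (j+2)
          have h2 : ((1:ℝ)/2) ^ (j+2) = (1/4) * (1/2)^j := by ring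
          nlinarith [abs_nonneg q, pow_nonneg (abs_nonneg q) (j+2)]
        calc |1 - q * q ^ (j+1+1)| ≤ |1| + |q * q ^ (j+1+1)| := abs_sub _ _
          _ ≤ 1 + (1/8) * (1/2)^j := by rw [abs_one]; linarith [h1]
      refine le_trans (prod_le_prod (fun j _ => abs_nonneg _) hb) ?_
      have hf0 : ∀ j : ℕ, (0:ℝ) ≤ (1/8) * (1/2)^j := fun j => by positivity
      have hS : ∑ j ∈ range r, (1/8) * (1/2:ℝ)^j ≤ 1/4 := by
        rw [← mul_sum]
        nlinarith [geomb2 (by norm_num : (0:ℝ) ≤ 1/2) (le_refl (1/2:ℝ)) r]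
      refine le_trans (prod_one_add_le r hf0 (by linarith)) ?_
      have hS0 : (0:ℝ) ≤ ∑ j ∈ range r, (1/8) * (1/2:ℝ)^j := sum_nonneg fun j _ => hf0 j
      rw [show (4:ℝ)/3 = (3/4)⁻¹ by norm_num]
      exact inv_anti₀ (by norm_num) (by linarith)
    have h1 : (0:ℝ) ≤ 1 - q * q ^ (0+1) := by
      simp only [zero_add, pow_one]; nlinarith
    have h2 : (0:ℝ) ≤ 1 - q * q ^ 0 := by simp; nlinarith
    have h32 : (1 - q * q ^ (0+1)) * (1 - q * q ^ 0) ≤ 32/27 := by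
      simp only [pow_one, pow_zero, mul_one]
      nlinarith [mul_nonneg (sq_nonneg (3*q+1)) (by linarith : (0:ℝ) ≤ 5 - 3*q)]
    calc (∏ j ∈ range r, (1 - q * q ^ (j+1+1))) * (1 - q * q^(0+1)) * (1 - q * q^0)
        ≤ |∏ j ∈ range r, (1 - q * q ^ (j+1+1))| * ((1 - q * q^(0+1)) * (1 - q * q^0)) := by
          rw [mul_assoc]
          exact mul_le_mul_of_nonneg_right (le_abs_self _) (mul_nonneg h1 h2)
      _ ≤ (4/3) * (32/27) := mul_le_mul habs h32 (mul_nonneg h1 h2) (by norm_num)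
      _ ≤ 8/5 := by norm_num

lemma neg_binom (n k : ℕ) (hk : k ≤ n) : |qBinom q n k| ≤ 8/5 := by
  have hPk := neg_poch_one_le hql hq0 k
  have hPm := neg_poch_one_le hql hq0 (n-k)
  have hPn0 : 0 ≤ qPoch q q n := le_trans zero_le_one (neg_poch_one_le hql hq0 n)
  have hPn := neg_poch_le hql hq0 n
  have hD : 1 ≤ qPoch q q k * qPoch q q (n-k) := one_le_mul_of_one_le_of_one_le hPk hPm
  rw [qBinom, abs_div, abs_of_nonneg hPn0, abs_of_nonneg (by linarith : (0:ℝ) ≤ qPoch q q k * qPoch q q (n-k))]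
  calc qPoch q q n / (qPoch q q k * qPoch q q (n-k)) ≤ qPoch q q n := div_le_self hPn0 hD
    _ ≤ 8/5 := hPn

end neg

lemma poch_abs_le {q b : ℝ} (hq : |q| ≤ 1/2) (hb : |b| ≤ 1/4) (m : ℕ) :
    |qPoch q b m| ≤ 2 := by
  rw [qPoch, abs_prod]
  have hb' : ∀ j ∈ range m, |1 - b * q ^ j| ≤ 1 + (1/4) * (1/2)^j := by
    intro j _
    have h1 : |b * q ^ j| ≤ (1/4) * (1/2)^j := by
      rw [abs_mul, abs_pow]
      have : |q| ^ j ≤ (1/2) ^ j := pow_le_pow_left₀ (abs_nonneg q) hq j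
      nlinarith [abs_nonneg b, pow_nonneg (abs_nonneg q) j, pow_nonneg (abs_nonneg (q)) j,
        pow_pos (by norm_num : (0:ℝ) < 1/2) j]
    calc |1 - b * q ^ j| ≤ |1| + |b * q ^ j| := abs_sub _ _
      _ ≤ 1 + (1/4) * (1/2)^j := by rw [abs_one]; linarith
  refine le_trans (prod_le_prod (fun j _ => abs_nonneg _) hb') ?_
  have hf0 : ∀ j : ℕ, (0:ℝ) ≤ (1/4) * (1/2)^j := fun j => by positivity
  have hS : ∑ j ∈ range m, (1/4) * (1/2:ℝ)^j ≤ 1/2 := by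
    rw [← mul_sum]
    nlinarith [geomb2 (by norm_num : (0:ℝ) ≤ 1/2) (le_refl (1/2:ℝ)) m]
  refine le_trans (prod_one_add_le m hf0 hS) ?_
  have hS0 : (0:ℝ) ≤ ∑ j ∈ range m, (1/4) * (1/2:ℝ)^j := sum_nonneg fun j _ => hf0 j
  rw [show (2:ℝ) = (1/2)⁻¹ by norm_num]
  exact inv_anti₀ (by norm_num) (by linarith)

lemma sum_geom_bound (n : ℕ) : ∑ k ∈ range n, (12/5:ℝ)*(1/4)^k ≤ 16/5 := by
  rw [← mul_sum]
  have h := geomb (by norm_num : (0:ℝ) ≤ 1/4) (by norm_num) n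
  have h2 : ((1:ℝ) - 1/4)⁻¹ = 4/3 := by norm_num
  rw [h2] at h
  have h0 : (0:ℝ) ≤ ∑ k ∈ range n, (1/4:ℝ)^k := sum_nonneg fun k _ => by positivity
  nlinarith

section main
variable {q : ℝ} (hq : |q| ≤ 1/2) {n : ℕ} (hn : 1 ≤ n) {s : ℝ} (hs : |s| ≤ |q|)
  (hC : ∀ k, k ≤ n → |qBinom q n k * qPoch q (q^(n+1)) (n-k)| ≤ 24/5)
include hq hn hs hC

lemma padeA_le : |padeA q n s| ≤ 8 := by
  have hq1 : |q| ≤ 1 := by linarith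
  rw [padeA, sum_range_succ']
  have hF0 : |qBinom q n 0 * q ^ (0 * n) * qPoch q (q ^ (n + 1)) (n - 0) * s ^ 0| ≤ 24/5 := by
    simp only [Nat.zero_mul, pow_zero, mul_one]
    exact hC 0 (Nat.zero_le n)
  have hterm : ∀ k ∈ range n,
      |qBinom q n (k+1) * q ^ ((k+1) * n) * qPoch q (q ^ (n + 1)) (n - (k+1)) * s ^ (k+1)|
        ≤ (12/5) * (1/4)^k := by
    intro k hk
    have hk1 : k + 1 ≤ n := mem_range.1 hk
    have e1 : |qBinom q n (k+1) * q ^ ((k+1) * n) * qPoch q (q ^ (n + 1)) (n - (k+1)) * s ^ (k+1)|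
        = |qBinom q n (k+1) * qPoch q (q ^ (n + 1)) (n - (k+1))| * (|q| ^ ((k+1)*n) * |s| ^ (k+1)) := by
      rw [abs_mul, abs_mul, abs_mul, abs_mul, abs_pow, abs_pow]
      ring
    rw [e1]
    have hp1 : |q| ^ ((k+1)*n) ≤ |q| ^ (k+1) :=
      pow_le_pow_of_le_one (abs_nonneg q) hq1 (Nat.le_mul_of_pos_right (k+1) hn)
    have hp2 : |s| ^ (k+1) ≤ |q| ^ (k+1) := pow_le_pow_left₀ (abs_nonneg s) hs (k+1)
    have hp3 : |q| ^ (k+1) * |q| ^ (k+1) = |q| ^ (2*k+2) := by rw [← pow_add]; ring_nf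
    have hp4 : |q| ^ (2*k+2) ≤ (1/2:ℝ) ^ (2*k+2) := pow_le_pow_left₀ (abs_nonneg q) hq (2*k+2)
    have hp5 : ((1:ℝ)/2) ^ (2*k+2) = (1/4) * (1/4)^k := by
      rw [pow_add, pow_mul]; norm_num; ring
    have hq0 : (0:ℝ) ≤ |q| ^ (k+1) := pow_nonneg (abs_nonneg q) _
    have hs0 : (0:ℝ) ≤ |s| ^ (k+1) := pow_nonneg (abs_nonneg s) _
    have hmid : |q| ^ ((k+1)*n) * |s| ^ (k+1) ≤ (1/4) * (1/4)^k := by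
      calc |q| ^ ((k+1)*n) * |s| ^ (k+1) ≤ |q| ^ (k+1) * |q| ^ (k+1) :=
            mul_le_mul hp1 hp2 hs0 hq0
        _ = |q| ^ (2*k+2) := hp3
        _ ≤ (1/2:ℝ) ^ (2*k+2) := hp4
        _ = (1/4) * (1/4)^k := hp5
    have hBP := hC (k+1) hk1
    have habs0 : (0:ℝ) ≤ |qBinom q n (k+1) * qPoch q (q ^ (n + 1)) (n - (k+1))| := abs_nonneg _
    have hmid0 : (0:ℝ) ≤ |q| ^ ((k+1)*n) * |s| ^ (k+1) := by positivity
    calc |qBinom q n (k+1) * qPoch q (q ^ (n + 1)) (n - (k+1))| * (|q| ^ ((k+1)*n) * |s| ^ (k+1))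
        ≤ (24/5) * ((1/4) * (1/4)^k) := mul_le_mul hBP hmid hmid0 (by norm_num)
      _ ≤ (12/5) * (1/4)^k := by nlinarith [pow_nonneg (by norm_num : (0:ℝ) ≤ 1/4) k]
  calc |(∑ k ∈ range n, qBinom q n (k+1) * q ^ ((k+1) * n) * qPoch q (q ^ (n + 1)) (n - (k+1)) * s ^ (k+1))
        + qBinom q n 0 * q ^ (0 * n) * qPoch q (q ^ (n + 1)) (n - 0) * s ^ 0|
      ≤ |∑ k ∈ range n, qBinom q n (k+1) * q ^ ((k+1) * n) * qPoch q (q ^ (n + 1)) (n - (k+1)) * s ^ (k+1)|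
        + |qBinom q n 0 * q ^ (0 * n) * qPoch q (q ^ (n + 1)) (n - 0) * s ^ 0| := abs_add_le _ _
    _ ≤ (∑ k ∈ range n, |qBinom q n (k+1) * q ^ ((k+1) * n) * qPoch q (q ^ (n + 1)) (n - (k+1)) * s ^ (k+1)|)
        + 24/5 := add_le_add (abs_sum_le_sum_abs _ _) hF0
    _ ≤ (∑ k ∈ range n, (12/5:ℝ)*(1/4)^k) + 24/5 := add_le_add_left (sum_le_sum hterm) _
    _ ≤ 16/5 + 24/5 := add_le_add_left (sum_geom_bound n) _
    _ = 8 := by norm_num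

lemma padeB_le : |padeB q n s| ≤ 8 := by
  have hq1 : |q| ≤ 1 := by linarith
  rw [padeB, sum_range_succ']
  have hF0 : |qBinom q n 0 * q ^ (0 * (0-1) / 2) * qPoch q (q ^ (n + 1)) (n - 0) * (-s) ^ 0| ≤ 24/5 := by
    simp only [Nat.zero_mul, Nat.zero_div, pow_zero, mul_one]
    exact hC 0 (Nat.zero_le n)
  have hterm : ∀ k ∈ range n,
      |qBinom q n (k+1) * q ^ ((k+1) * ((k+1)-1) / 2) * qPoch q (q ^ (n + 1)) (n - (k+1)) * (-s) ^ (k+1)|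
        ≤ (12/5) * (1/4)^k := by
    intro k hk
    have hk1 : k + 1 ≤ n := mem_range.1 hk
    have e1 : |qBinom q n (k+1) * q ^ ((k+1) * ((k+1)-1) / 2) * qPoch q (q ^ (n + 1)) (n - (k+1)) * (-s) ^ (k+1)|
        = |qBinom q n (k+1) * qPoch q (q ^ (n + 1)) (n - (k+1))| * (|q| ^ ((k+1)*((k+1)-1)/2) * |s| ^ (k+1)) := by
      rw [abs_mul, abs_mul, abs_mul, abs_mul, abs_pow, abs_pow, abs_neg]
      ring
    rw [e1]
    have hke : k ≤ (k+1) * ((k+1)-1) / 2 := by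
      simp only [Nat.add_sub_cancel]
      rw [Nat.le_div_iff_mul_le (by norm_num : 0 < 2)]
      have hkk : k ≤ k * k := by
        cases k with
        | zero => simp
        | succ p => exact Nat.le_mul_of_pos_left _ (Nat.succ_pos p)
      calc k * 2 = k + k := by ring
        _ ≤ k * k + k := by omega
        _ = (k+1) * k := by ring
    have hp1 : |q| ^ ((k+1)*((k+1)-1)/2) ≤ |q| ^ k :=
      pow_le_pow_of_le_one (abs_nonneg q) hq1 hke
    have hp2 : |s| ^ (k+1) ≤ |q| ^ (k+1) := pow_le_pow_left₀ (abs_nonneg s) hs (k+1)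
    have hp3 : |q| ^ k * |q| ^ (k+1) = |q| ^ (2*k+1) := by rw [← pow_add]; ring_nf
    have hp4 : |q| ^ (2*k+1) ≤ (1/2:ℝ) ^ (2*k+1) := pow_le_pow_left₀ (abs_nonneg q) hq (2*k+1)
    have hp5 : ((1:ℝ)/2) ^ (2*k+1) = (1/2) * (1/4)^k := by
      rw [pow_add, pow_mul]; norm_num; ring
    have hq0 : (0:ℝ) ≤ |q| ^ k := pow_nonneg (abs_nonneg q) _
    have hs0 : (0:ℝ) ≤ |s| ^ (k+1) := pow_nonneg (abs_nonneg s) _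
    have hmid : |q| ^ ((k+1)*((k+1)-1)/2) * |s| ^ (k+1) ≤ (1/2) * (1/4)^k := by
      calc |q| ^ ((k+1)*((k+1)-1)/2) * |s| ^ (k+1) ≤ |q| ^ k * |q| ^ (k+1) :=
            mul_le_mul hp1 hp2 hs0 hq0
        _ = |q| ^ (2*k+1) := hp3
        _ ≤ (1/2:ℝ) ^ (2*k+1) := hp4
        _ = (1/2) * (1/4)^k := hp5
    have hBP := hC (k+1) hk1
    have hmid0 : (0:ℝ) ≤ |q| ^ ((k+1)*((k+1)-1)/2) * |s| ^ (k+1) := by positivity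
    calc |qBinom q n (k+1) * qPoch q (q ^ (n + 1)) (n - (k+1))| * (|q| ^ ((k+1)*((k+1)-1)/2) * |s| ^ (k+1))
        ≤ (24/5) * ((1/2) * (1/4)^k) := mul_le_mul hBP hmid hmid0 (by norm_num)
      _ = (12/5) * (1/4)^k := by ring
  calc |(∑ k ∈ range n, qBinom q n (k+1) * q ^ ((k+1) * ((k+1)-1) / 2) * qPoch q (q ^ (n + 1)) (n - (k+1)) * (-s) ^ (k+1))
        + qBinom q n 0 * q ^ (0 * (0-1) / 2) * qPoch q (q ^ (n + 1)) (n - 0) * (-s) ^ 0|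
      ≤ |∑ k ∈ range n, qBinom q n (k+1) * q ^ ((k+1) * ((k+1)-1) / 2) * qPoch q (q ^ (n + 1)) (n - (k+1)) * (-s) ^ (k+1)|
        + |qBinom q n 0 * q ^ (0 * (0-1) / 2) * qPoch q (q ^ (n + 1)) (n - 0) * (-s) ^ 0| := abs_add_le _ _
    _ ≤ (∑ k ∈ range n, |qBinom q n (k+1) * q ^ ((k+1) * ((k+1)-1) / 2) * qPoch q (q ^ (n + 1)) (n - (k+1)) * (-s) ^ (k+1)|)
        + 24/5 := add_le_add (abs_sum_le_sum_abs _ _) hF0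
    _ ≤ (∑ k ∈ range n, (12/5:ℝ)*(1/4)^k) + 24/5 := add_le_add_left (sum_le_sum hterm) _
    _ ≤ 16/5 + 24/5 := add_le_add_left (sum_geom_bound n) _
    _ = 8 := by norm_num

end main

end auxiliaryLemmas

/-- polynomial-term estimate
`max(|A_n(q^K t)|, |(t)_K B_n(q^K t)|) ≤ 8 max(1, (t)_K)`. -/
theorem polynomial_term_estimate (d : ℤ) (hd : 2 ≤ |d|) (t : ℝ) (ht0 : 0 < |t|)
    (ht1 : |t| < 1) (n K : ℕ) (hn : 1 ≤ n) (hK : 1 ≤ K) :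
    max |padeA (1 / (d : ℝ)) n ((1 / (d : ℝ)) ^ K * t)|
        |qPoch (1 / (d : ℝ)) t K * padeB (1 / (d : ℝ)) n ((1 / (d : ℝ)) ^ K * t)| ≤
      8 * max 1 (qPoch (1 / (d : ℝ)) t K) := by
  set q : ℝ := 1 / (d : ℝ) with hqdef
  obtain ⟨hqabs, hC⟩ : |q| ≤ 1/2 ∧
      (∀ k, k ≤ n → |qBinom q n k * qPoch q (q^(n+1)) (n-k)| ≤ 24/5) := by
    rcases le_abs.1 hd with h | h
    · have h2 : (2:ℝ) ≤ (d:ℝ) := by exact_mod_cast h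
      have hq0 : 0 < q := by rw [hqdef]; positivity
      have hq2 : q ≤ 1/2 := by
        rw [hqdef, div_le_div_iff₀ (by linarith) (by norm_num)]
        linarith
      refine ⟨by rw [abs_of_pos hq0]; exact hq2, fun k hk => ?_⟩
      have hb := pos_binom hq0 hq2 n k hk
      have ha1 : q^(n+1) ≤ 1 := pow_le_one₀ hq0.le (by linarith)
      have ha0 : 0 ≤ q^(n+1) := by positivity
      have hp1 := pos_poch_ub hq0 hq2 ha0 ha1 (n-k)
      have hp0 := pos_poch_nonneg hq0 hq2 ha0 ha1 (n-k)
      rw [abs_of_nonneg (mul_nonneg hb.1 hp0)]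
      nlinarith [hb.1, hb.2]
    · have h2 : (2:ℝ) ≤ -(d:ℝ) := by exact_mod_cast h
      have hq0 : q < 0 := by
        rw [hqdef]
        apply div_neg_of_pos_of_neg one_pos
        linarith
      have hq2 : -(1/2) ≤ q := by
        have h3 : (0:ℝ) < -(d:ℝ) := by linarith
        have h4 : 1/(-(d:ℝ)) ≤ 1/2 := by
          rw [div_le_div_iff₀ h3 (by norm_num)]; linarith
        have h5 : q = -(1/(-(d:ℝ))) := by rw [hqdef]; field_simp
        rw [h5]; linarith
      have habs : |q| ≤ 1/2 := by rw [abs_of_neg hq0]; linarith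
      refine ⟨habs, fun k hk => ?_⟩
      have hb := neg_binom hq2 hq0 n k hk
      have hbq : |q^(n+1)| ≤ 1/4 := by
        rw [abs_pow]
        calc |q|^(n+1) ≤ (1/2:ℝ)^(n+1) := pow_le_pow_left₀ (abs_nonneg q) habs (n+1)
          _ ≤ (1/2:ℝ)^2 := pow_le_pow_of_le_one (by norm_num) (by norm_num) (by omega)
          _ = 1/4 := by norm_num
      have hp := poch_abs_le habs hbq (n-k)
      rw [abs_mul]
      nlinarith [abs_nonneg (qBinom q n k), abs_nonneg (qPoch q (q^(n+1)) (n-k))]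
  have hq1 : |q| ≤ 1 := by linarith
  have hs : |q ^ K * t| ≤ |q| := by
    rw [abs_mul, abs_pow]
    have h1 : |q| ^ K ≤ |q| ^ 1 := pow_le_pow_of_le_one (abs_nonneg q) hq1 hK
    have h2 : |q| ^ K * |t| ≤ |q| ^ K * 1 :=
      mul_le_mul_of_nonneg_left ht1.le (pow_nonneg (abs_nonneg q) K)
    rw [pow_one] at h1
    nlinarith [pow_nonneg (abs_nonneg q) K]
  have hPochT : 0 < qPoch q t K := by
    rw [qPoch]
    apply prod_pos
    intro j _
    have h1 : |t * q ^ j| < 1 := by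
      rw [abs_mul, abs_pow]
      have h2 : |q| ^ j ≤ 1 := pow_le_one₀ (abs_nonneg q) hq1
      nlinarith [abs_nonneg t, pow_nonneg (abs_nonneg q) j]
    have := (abs_lt.1 h1).2
    linarith
  have hA := padeA_le hqabs hn hs hC
  have hB := padeB_le hqabs hn hs hC
  have hmax1 : (1:ℝ) ≤ max 1 (qPoch q t K) := le_max_left _ _
  have hmax2 : qPoch q t K ≤ max 1 (qPoch q t K) := le_max_right _ _
  apply max_le
  · nlinarith
  · rw [abs_mul, abs_of_pos hPochT]
    calc qPoch q t K * |padeB q n (q ^ K * t)| ≤ qPoch q t K * 8 :=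
          mul_le_mul_of_nonneg_left hB hPochT.le
      _ ≤ max 1 (qPoch q t K) * 8 := mul_le_mul_of_nonneg_right hmax2 (by norm_num)
      _ = 8 * max 1 (qPoch q t K) := mul_comm _ _
end

section
/- General irrationality-measure lemma: Let Φ ∈ ℝ and suppose there are rationals q_n, p_n with q_n Φ − p_n = r_n for n ≥ n₀, satisfying (i) q_n p_{n+1} − p_n q_{n+1} ≠ 0, (ii) |q_n|, |p_n| ≤ e^{a n^2 + a₁ n + a₂}, (iii) |r_n| ≤ e^{−b n^2 + b₁ n + b₂} < 1, with a, b > 0 and a₁, a₂, b₁, b₂ ≥ 0. Set c₁ = (b₁ + √(b₁² + 4bb₂))/(2b), c₂ = 2ac₁ + 4a + a₁, c₃ = c₁(ac₁ + 4a + a₁) + 4a + 2a₁ + a₂. If M, N ∈ ℤ with |N| ≥ e^{b n₀² − b₁ n₀ − b₂}/2 and there is a largest n̄ ≥ n₀ with 2|N| e^{−b n̄² + b₁ n̄ + b₂} ≥ 1 such that N p_n − M q_n ∈ ℤ for n = n̄+1 and n = n̄+2, then |Φ − M/N| > e^{−c₃} (2|N|)^{−(1 + a/b + c₂/√(b log(2|N|)))}.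 -/
/-- the general irrationality-measure lemma. -/
theorem irrationality_measure_lemma
    (Φ : ℝ) (p q : ℕ → ℚ) (r : ℕ → ℝ) (n₀ : ℕ) (hn₀ : 1 ≤ n₀)
    (a a₁ a₂ b b₁ b₂ : ℝ) (ha : 0 < a) (hb : 0 < b)
    (ha₁ : 0 ≤ a₁) (ha₂ : 0 ≤ a₂) (hb₁ : 0 ≤ b₁) (hb₂ : 0 ≤ b₂)
    (hform : ∀ n : ℕ, n₀ ≤ n → (q n : ℝ) * Φ - (p n : ℝ) = r n)
    (hdet : ∀ n : ℕ, n₀ ≤ n → q n * p (n + 1) - p n * q (n + 1) ≠ 0)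
    (hQ : ∀ n : ℕ, n₀ ≤ n →
      |(q n : ℝ)| ≤ Real.exp (a * n ^ 2 + a₁ * n + a₂) ∧
      |(p n : ℝ)| ≤ Real.exp (a * n ^ 2 + a₁ * n + a₂))
    (hR : ∀ n : ℕ, n₀ ≤ n →
      |r n| ≤ Real.exp (-b * n ^ 2 + b₁ * n + b₂) ∧
      Real.exp (-b * n ^ 2 + b₁ * n + b₂) < 1)
    (c₁ c₂ c₃ : ℝ)
    (hc₁ : c₁ = (b₁ + Real.sqrt (b₁ ^ 2 + 4 * b * b₂)) / (2 * b))
    (hc₂ : c₂ = 2 * a * c₁ + 4 * a + a₁)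
    (hc₃ : c₃ = c₁ * (a * c₁ + 4 * a + a₁) + 4 * a + 2 * a₁ + a₂)
    (M N : ℤ)
    (hN : Real.exp (b * n₀ ^ 2 - b₁ * n₀ - b₂) / 2 ≤ |(N : ℝ)|)
    (nb : ℕ) (hnb : n₀ ≤ nb)
    (hnbR : 1 ≤ 2 * |(N : ℝ)| * Real.exp (-b * nb ^ 2 + b₁ * nb + b₂))
    (hnbmax : ∀ m : ℕ, nb < m → 2 * |(N : ℝ)| * Real.exp (-b * m ^ 2 + b₁ * m + b₂) < 1)
    (hint : ∀ m : ℕ, m = nb + 1 ∨ m = nb + 2 →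
      ∃ z : ℤ, (z : ℚ) = (N : ℚ) * p m - (M : ℚ) * q m) :
    Real.exp (-c₃) *
        (2 * |(N : ℝ)|) ^
          (-(1 + a / b + c₂ / Real.sqrt (b * Real.log (2 * |(N : ℝ)|)))) <
      |Φ - (M : ℝ) / (N : ℝ)| := by
  have hbne : b ≠ 0 := ne_of_gt hb
  -- N ≠ 0
  have hNR : (N : ℝ) ≠ 0 := by
    intro h
    rw [h, abs_zero] at hN
    have : 0 < Real.exp (b * n₀ ^ 2 - b₁ * n₀ - b₂) / 2 := by positivity
    linarith
  have hNZ : N ≠ 0 := by exact_mod_cast hNR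
  have hN1 : (1 : ℝ) ≤ |(N : ℝ)| := by
    have : (1 : ℤ) ≤ |N| := Int.one_le_abs hNZ
    calc (1 : ℝ) ≤ ((|N| : ℤ) : ℝ) := by exact_mod_cast this
      _ = |(N : ℝ)| := by push_cast; rfl
  set T : ℝ := 2 * |(N : ℝ)| with hT
  have hT2 : (2 : ℝ) ≤ T := by rw [hT]; linarith
  have hTpos : (0 : ℝ) < T := by linarith
  set L : ℝ := Real.log T with hLdef
  have hLpos : 0 < L := Real.log_pos (by linarith)
  have hTexp : T = Real.exp L := (Real.exp_log hTpos).symm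
  -- choose n ∈ {nb+1, nb+2} with nonzero integer linear form
  obtain ⟨z1, hz1⟩ := hint (nb + 1) (Or.inl rfl)
  obtain ⟨z2, hz2⟩ := hint (nb + 2) (Or.inr rfl)
  have hkey : ∃ n : ℕ, (n = nb + 1 ∨ n = nb + 2) ∧
      ∃ z : ℤ, z ≠ 0 ∧ (z : ℚ) = (N : ℚ) * p n - (M : ℚ) * q n := by
    by_cases h1 : z1 = 0
    · by_cases h2 : z2 = 0
      · exfalso
        rw [h1] at hz1; rw [h2] at hz2
        have hNQ : (N : ℚ) ≠ 0 := by exact_mod_cast hNZ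
        have hdet' := hdet (nb + 1) (by omega)
        apply hdet'
        have hzz : (N : ℚ) * (q (nb + 1) * p (nb + 1 + 1) - p (nb + 1) * q (nb + 1 + 1)) = 0 := by
          have e1 : (N : ℚ) * p (nb + 1) = (M : ℚ) * q (nb + 1) := by
            push_cast at hz1; linarith
          have e2 : (N : ℚ) * p (nb + 2) = (M : ℚ) * q (nb + 2) := by
            push_cast at hz2; linarith
          have : nb + 1 + 1 = nb + 2 := by omega
          rw [this]
          linear_combination q (nb + 1) * e2 - q (nb + 2) * e1
        rcases mul_eq_zero.mp hzz with h | h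
        · exact absurd h hNQ
        · exact h
      · exact ⟨nb + 2, Or.inr rfl, z2, h2, hz2⟩
    · exact ⟨nb + 1, Or.inl rfl, z1, h1, hz1⟩
  obtain ⟨n, hn, z, hzne, hz⟩ := hkey
  have hn₀n : n₀ ≤ n := by rcases hn with rfl | rfl <;> omega
  have hnbn : nb < n := by rcases hn with rfl | rfl <;> omega
  set D : ℝ := Φ - (M : ℝ) / (N : ℝ) with hD
  set E : ℝ := a * n ^ 2 + a₁ * n + a₂ with hE
  -- real form of the integer linear form
  have hzR : ((z : ℤ) : ℝ) = (N : ℝ) * (p n : ℝ) - (M : ℝ) * (q n : ℝ) := by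
    have := congrArg (fun x : ℚ => (x : ℝ)) hz
    push_cast at this
    exact_mod_cast this
  have hform' := hform n hn₀n
  have hND : (N : ℝ) * D = (N : ℝ) * Φ - (M : ℝ) := by
    rw [hD]; field_simp
  have hzR2 : ((z : ℤ) : ℝ) = (q n : ℝ) * (N : ℝ) * D - (N : ℝ) * r n := by
    rw [hzR]
    linear_combination (-(q n : ℝ)) * hND - (N : ℝ) * hform'
  have hzabs : (1 : ℝ) ≤ |((z : ℤ) : ℝ)| := by
    have : (1 : ℤ) ≤ |z| := Int.one_le_abs hzne
    calc (1 : ℝ) ≤ ((|z| : ℤ) : ℝ) := by exact_mod_cast this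
      _ = |((z : ℤ) : ℝ)| := by push_cast; rfl
  -- bound on the remainder term
  have hNr : |(N : ℝ)| * |r n| < 1 / 2 := by
    have h1 := hnbmax n hnbn
    have h2 := (hR n hn₀n).1
    have h4 : |(N : ℝ)| * |r n| ≤ |(N : ℝ)| * Real.exp (-b * n ^ 2 + b₁ * n + b₂) :=
      mul_le_mul_of_nonneg_left h2 (abs_nonneg _)
    rw [hT] at h1
    linarith
  -- main lower bound:  2|N| |q n| |D| > 1
  have hmain : 1 < |D| * (T * |(q n : ℝ)|) := by
    have htri : |((z : ℤ) : ℝ)| ≤ |(q n : ℝ)| * |(N : ℝ)| * |D| + |(N : ℝ)| * |r n| := by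
      rw [hzR2]
      calc |(q n : ℝ) * (N : ℝ) * D - (N : ℝ) * r n|
          ≤ |(q n : ℝ) * (N : ℝ) * D| + |(N : ℝ) * r n| := abs_sub _ _
        _ = |(q n : ℝ)| * |(N : ℝ)| * |D| + |(N : ℝ)| * |r n| := by
            rw [abs_mul, abs_mul, abs_mul]
    have h5 : 1 / 2 < |(q n : ℝ)| * |(N : ℝ)| * |D| := by linarith
    have h6 : |D| * (T * |(q n : ℝ)|) = 2 * (|(q n : ℝ)| * |(N : ℝ)| * |D|) := by
      rw [hT]; ring
    linarith
  -- bound nb via L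
  set s : ℝ := Real.sqrt (L / b) with hs
  have hs0 : 0 ≤ s := Real.sqrt_nonneg _
  have hbs2 : b * s ^ 2 = L := by
    rw [hs, Real.sq_sqrt (by positivity)]
    field_simp
  set R : ℝ := Real.sqrt (b₁ ^ 2 + 4 * b * b₂) with hRdef
  have hR0 : 0 ≤ R := Real.sqrt_nonneg _
  have hR2 : R ^ 2 = b₁ ^ 2 + 4 * b * b₂ := Real.sq_sqrt (by positivity)
  have hroot : b * c₁ ^ 2 - b₁ * c₁ - b₂ = 0 := by
    rw [hc₁]
    field_simp
    linear_combination hR2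
  have h2bc₁ : 2 * b * c₁ - b₁ = R := by
    rw [hc₁]; field_simp; ring
  have hc₁0 : 0 ≤ c₁ := by
    rw [hc₁]
    exact div_nonneg (by linarith) (by linarith)
  -- from hnbR:  b nb² - b₁ nb - b₂ ≤ L
  have hAB : b * (nb : ℝ) ^ 2 - b₁ * nb - b₂ ≤ L := by
    have h1 : (1 : ℝ) ≤ Real.exp (L + (-b * nb ^ 2 + b₁ * nb + b₂)) := by
      rw [Real.exp_add, ← hTexp]
      exact hnbR
    have := Real.one_le_exp_iff.mp h1
    linarith
  have hnbL : (nb : ℝ) ≤ c₁ + s := by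
    by_contra hcon
    push_neg at hcon
    have ht0 : (0 : ℝ) ≤ (nb : ℝ) := Nat.cast_nonneg _
    have hpos : 0 < b * (nb : ℝ) + b * c₁ + b * s - b₁ := by
      have h7 : b * c₁ < b * (nb : ℝ) := mul_lt_mul_of_pos_left (by linarith) hb
      have h8 : (0 : ℝ) ≤ b * s := mul_nonneg hb.le hs0
      linarith [h2bc₁, hR0]
    have hP : 0 < ((nb : ℝ) - (c₁ + s)) * (b * (nb : ℝ) + b * c₁ + b * s - b₁) :=
      mul_pos (by linarith) hpos
    have hQ2 : (0 : ℝ) ≤ s * (2 * b * c₁ - b₁) := by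
      rw [h2bc₁]; exact mul_nonneg hs0 hR0
    have hiden : b * (nb : ℝ) ^ 2 - b₁ * (nb : ℝ) - b₂ =
        L + ((nb : ℝ) - (c₁ + s)) * (b * (nb : ℝ) + b * c₁ + b * s - b₁) +
          s * (2 * b * c₁ - b₁) := by
      linear_combination hroot + hbs2
    linarith [hAB, hP, hQ2, hiden]
  set S : ℝ := c₁ + s + 2 with hS
  have hnS : (n : ℝ) ≤ S := by
    have : (n : ℝ) ≤ (nb : ℝ) + 2 := by
      have : n ≤ nb + 2 := by omega
      exact_mod_cast this
    rw [hS]; linarith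
  -- identity for the exponent
  have hid : a * S ^ 2 + a₁ * S + a₂ = c₃ + a / b * L + c₂ * s := by
    rw [hc₂, hc₃, hS, ← hbs2]
    field_simp
    ring
  have hEle : E ≤ c₃ + a / b * L + c₂ * s := by
    rw [← hid, hE]
    have hn0 : (0 : ℝ) ≤ (n : ℝ) := Nat.cast_nonneg _
    have hsq : ((n : ℝ)) ^ 2 ≤ S ^ 2 := pow_le_pow_left₀ hn0 hnS 2
    have h9 : a * ((n : ℝ)) ^ 2 ≤ a * S ^ 2 := mul_le_mul_of_nonneg_left hsq ha.le
    have h10 : a₁ * (n : ℝ) ≤ a₁ * S := mul_le_mul_of_nonneg_left hnS ha₁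
    linarith
  -- relate c₂ s and c₂ / √(bL) * L
  have hsbL : Real.sqrt (b * L) * s = L := by
    rw [hs, ← Real.sqrt_mul (by positivity)]
    rw [show b * L * (L / b) = L ^ 2 by field_simp]
    exact Real.sqrt_sq hLpos.le
  have hsbLpos : 0 < Real.sqrt (b * L) := Real.sqrt_pos.mpr (by positivity)
  have hseq : s = L / Real.sqrt (b * L) :=
    (eq_div_iff (ne_of_gt hsbLpos)).mpr (by rw [mul_comm]; exact hsbL)
  have hcs : c₂ / Real.sqrt (b * L) * L = c₂ * s := by
    rw [hseq]; ring
  -- final exponent inequality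
  have hxle : -c₃ + L * (-(1 + a / b + c₂ / Real.sqrt (b * L))) + L + E ≤ 0 := by
    linarith [hEle, hcs]
  -- assemble
  have hqE : |(q n : ℝ)| ≤ Real.exp E := (hQ n hn₀n).1
  have hTE : 0 < T * Real.exp E := by positivity
  have hfinal : Real.exp (-c₃) * T ^ (-(1 + a / b + c₂ / Real.sqrt (b * L))) * (T * Real.exp E) < |D| * (T * Real.exp E) := by
    have hlhs : Real.exp (-c₃) * T ^ (-(1 + a / b + c₂ / Real.sqrt (b * L))) * (T * Real.exp E)
        = Real.exp (-c₃ + L * (-(1 + a / b + c₂ / Real.sqrt (b * L))) + L + E) := by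
      rw [Real.rpow_def_of_pos hTpos, ← hLdef, hTexp]
      rw [← Real.exp_add, ← Real.exp_add, ← Real.exp_add]
      congr 1
      ring
    rw [hlhs]
    have h1 : Real.exp (-c₃ + L * (-(1 + a / b + c₂ / Real.sqrt (b * L))) + L + E) ≤ 1 := by
      calc Real.exp (-c₃ + L * (-(1 + a / b + c₂ / Real.sqrt (b * L))) + L + E)
          ≤ Real.exp 0 := Real.exp_le_exp.mpr hxle
        _ = 1 := Real.exp_zero
    have h2 : |D| * (T * |(q n : ℝ)|) ≤ |D| * (T * Real.exp E) := by
      apply mul_le_mul_of_nonneg_left _ (abs_nonneg _)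
      exact mul_le_mul_of_nonneg_left hqE hTpos.le
    linarith
  exact lt_of_mul_lt_mul_right hfinal hTE.le
end

section
/- The optimization min over γ ∈ (0, 1+√3) of a(γ)/b(γ), where a(γ)/b(γ) = (γ²+3)/(4γ−γ²) for 0 < γ ≤ 1 and a(γ)/b(γ) = (γ²+2γ+1)/(2+2γ−γ²) for 1 ≤ γ < 1+√3, is attained at γ = 1 with value 4/3; moreover the function (γ²+3)/(4γ−γ²) is decreasing on (0,1) and (γ²+2γ+1)/(2+2γ−γ²) is increasing on [1, 1+√3). -/
/-- the minimum of `a(γ)/b(γ)` over `γ ∈ (0, 1+√3)` is `4/3`,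
attained at `γ = 1`; the first piece is decreasing on `(0,1)` and the second is
increasing on `[1, 1+√3)`. -/
theorem gamma_optimization :
    (∀ γ : ℝ, 0 < γ → γ < 1 + Real.sqrt 3 →
      (4 : ℝ) / 3 ≤ (if γ ≤ 1 then (γ ^ 2 + 3) / (4 * γ - γ ^ 2)
        else (γ ^ 2 + 2 * γ + 1) / (2 + 2 * γ - γ ^ 2))) ∧
    ((1 : ℝ) ^ 2 + 3) / (4 * 1 - (1 : ℝ) ^ 2) = 4 / 3 ∧
    ((1 : ℝ) ^ 2 + 2 * 1 + 1) / (2 + 2 * 1 - (1 : ℝ) ^ 2) = 4 / 3 ∧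
    StrictAntiOn (fun γ : ℝ => (γ ^ 2 + 3) / (4 * γ - γ ^ 2)) (Set.Ioo 0 1) ∧
    StrictMonoOn (fun γ : ℝ => (γ ^ 2 + 2 * γ + 1) / (2 + 2 * γ - γ ^ 2))
      (Set.Ico 1 (1 + Real.sqrt 3)) := by
  have hs3 : Real.sqrt 3 ^ 2 = 3 := Real.sq_sqrt (by norm_num)
  refine ⟨?_, by norm_num, by norm_num, ?_, ?_⟩
  · intro γ hγ hγ'
    split_ifs with h
    · rw [le_div_iff₀ (by nlinarith)]
      nlinarith [mul_nonneg hγ.le (sub_nonneg.2 h)]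
    · push_neg at h
      have hden : 0 < 2 + 2 * γ - γ ^ 2 := by nlinarith [Real.sqrt_nonneg 3]
      rw [le_div_iff₀ hden]
      nlinarith
  · intro x hx y hy hxy
    simp only
    rw [div_lt_div_iff₀ (by nlinarith [hy.1, hy.2]) (by nlinarith [hx.1, hx.2])]
    have key : 0 < (y - x) * (12 - 3*x - 3*y - 4*x*y) := by
      have hxy1 : x * y < x := mul_lt_of_lt_one_right hx.1 hy.2
      have : 0 < 12 - 3*x - 3*y - 4*x*y := by nlinarith [hx.2, hy.2]
      exact mul_pos (by linarith) this
    nlinarith [key]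
  · intro x hx y hy hxy
    simp only
    have hdy : 0 < 2 + 2 * y - y ^ 2 := by nlinarith [hy.1, hy.2, Real.sqrt_nonneg 3]
    have hdx : 0 < 2 + 2 * x - x ^ 2 := by nlinarith [hx.1, hx.2, Real.sqrt_nonneg 3]
    rw [div_lt_div_iff₀ hdx hdy]
    nlinarith [hx.1, hy.1, mul_pos (lt_of_lt_of_le one_pos hx.1) (lt_of_lt_of_le one_pos hy.1)]
end
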